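/- arXiv:1105.3251 — 6 statements merged into one kernel-verified Lean document; each statement's English description precedes it below -/
import Mathlib

section
/- Let φ : ℝ → [0,∞) be convex with φ(0) = 0 and φ(-t) + φ(t) > 0 for all t ≠ 0. If α, β > 0 and a, b ∈ ℝ satisfy a·b < 0, then α·φ(a/α) + β·φ(b/β) > (α+β)·φ((a+b)/(α+β)). -/
-- interpolation: for 0 ≤ t ≤ y, y * φ t ≤ t * φ y (uses φ 0 = 0 and convexity)
lemma interp_aux (φ : ℝ → ℝ) (hconv : ConvexOn ℝ Set.univ φ) (h0 : φ 0 = 0)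
    {t y : ℝ} (ht : 0 ≤ t) (hty : t ≤ y) (hy : 0 < y) : y * φ t ≤ t * φ y := by
  have hd1 : t / y ≤ 1 := div_le_one_of_le₀ hty hy.le
  have hd0 : (0:ℝ) ≤ t / y := by positivity
  have h := hconv.2 (Set.mem_univ (0:ℝ)) (Set.mem_univ y)
    (show (0:ℝ) ≤ 1 - t/y by linarith) hd0 (show (1 - t/y) + t/y = 1 by ring)
  have harg : (1 - t/y) • (0:ℝ) + (t/y) • y = t := by
    rw [smul_eq_mul, smul_eq_mul, mul_zero, zero_add, div_mul_cancel₀ t hy.ne']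
  rw [harg] at h
  simp only [smul_eq_mul, h0, mul_zero, zero_add] at h
  have := mul_le_mul_of_nonneg_left h hy.le
  calc y * φ t ≤ y * (t / y * φ y) := this
    _ = t * φ y := by field_simp

lemma key_aux (φ : ℝ → ℝ) (hconv : ConvexOn ℝ Set.univ φ)
    (hnonneg : ∀ t, 0 ≤ φ t) (h0 : φ 0 = 0)
    (hpos : ∀ t : ℝ, t ≠ 0 → 0 < φ (-t) + φ t)
    {x y : ℝ} (hx : x < 0) (hy : 0 < y) : x * φ y < y * φ x := by
  set t := min (-x) y with htdef
  have ht : 0 < t := lt_min (by linarith) hy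
  have h1 : y * φ t ≤ t * φ y := interp_aux φ hconv h0 ht.le (min_le_right _ _) hy
  have h2 : (-x) * φ (-t) ≤ t * φ x := by
    have hconv' : ConvexOn ℝ Set.univ (fun s => φ (-s)) := by
      have := hconv.comp_affineMap (-(AffineMap.id ℝ ℝ))
      simpa [Function.comp_def] using this
    have := interp_aux (fun s => φ (-s)) hconv' (by simpa using h0)
      ht.le (min_le_left _ _) (by linarith : (0:ℝ) < -x)
    simpa using this
  have h3 := hpos t ht.ne'
  have hxpos : (0:ℝ) < -x := by linarith
  nlinarith [mul_le_mul_of_nonneg_left h1 hxpos.le,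
    mul_le_mul_of_nonneg_left h2 hy.le,
    mul_pos (mul_pos hxpos hy) h3, ht]

lemma main_aux (φ : ℝ → ℝ) (hconv : ConvexOn ℝ Set.univ φ)
    (hnonneg : ∀ t, 0 ≤ φ t) (h0 : φ 0 = 0)
    (hpos : ∀ t : ℝ, t ≠ 0 → 0 < φ (-t) + φ t)
    (α β : ℝ) (hα : 0 < α) (hβ : 0 < β)
    {x y : ℝ} (hx : x < 0) (hy : 0 < y) :
    (α + β) * φ ((α * x + β * y) / (α + β)) < α * φ x + β * φ y := by
  have hαβ : 0 < α + β := by linarith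
  set z := (α * x + β * y) / (α + β) with hzdef
  have hz_eq : z * (α + β) = α * x + β * y := by
    rw [hzdef, div_mul_cancel₀ _ hαβ.ne']
  have hL : x * φ y < y * φ x := key_aux φ hconv hnonneg h0 hpos hx hy
  rcases le_or_gt 0 z with hz | hz
  · -- 0 ≤ z ≤ y
    have hzy : z ≤ y := by
      rw [hzdef, div_le_iff₀ hαβ]; nlinarith
    have h1 : y * φ z ≤ z * φ y := interp_aux φ hconv h0 hz hzy hy
    have hz2 : (α + β) * (z * φ y) = (α * x + β * y) * φ y := by
      rw [show (α+β)*(z*φ y) = (z*(α+β))*φ y from by ring, hz_eq]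
    nlinarith [mul_le_mul_of_nonneg_left h1 hαβ.le, hz2,
      mul_lt_mul_of_pos_left hL hα, hy]
  · -- x ≤ z < 0
    have hconv' : ConvexOn ℝ Set.univ (fun s => φ (-s)) := by
      have := hconv.comp_affineMap (-(AffineMap.id ℝ ℝ))
      simpa [Function.comp_def] using this
    have hxz : x ≤ z := by
      rw [hzdef, le_div_iff₀ hαβ]; nlinarith
    have h1 : (-x) * φ z ≤ (-z) * φ x := by
      have := interp_aux (fun s => φ (-s)) hconv' (by simpa using h0)
        (by linarith : (0:ℝ) ≤ -z) (by linarith : -z ≤ -x) (by linarith : (0:ℝ) < -x)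
      simpa using this
    have hz2 : (α + β) * (-z * φ x) = -(α * x + β * y) * φ x := by
      rw [show (α+β)*(-z*φ x) = -(z*(α+β))*φ x from by ring, hz_eq]
    nlinarith [mul_le_mul_of_nonneg_left h1 hαβ.le, hz2,
      mul_lt_mul_of_pos_left hL hβ, neg_pos.2 hx]

theorem stmt_2 (φ : ℝ → ℝ) (hconv : ConvexOn ℝ Set.univ φ)
    (hnonneg : ∀ t, 0 ≤ φ t) (h0 : φ 0 = 0)
    (hpos : ∀ t : ℝ, t ≠ 0 → 0 < φ (-t) + φ t)
    (α β : ℝ) (hα : 0 < α) (hβ : 0 < β) (a b : ℝ) (hab : a * b < 0) :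
    (α + β) * φ ((a + b) / (α + β)) < α * φ (a / α) + β * φ (b / β) := by
  rcases mul_neg_iff.mp hab with ⟨ha, hb⟩ | ⟨ha, hb⟩
  · -- a > 0, b < 0
    have h := main_aux φ hconv hnonneg h0 hpos β α hβ hα
      (x := b / β) (y := a / α) (div_neg_of_neg_of_pos hb hβ) (div_pos ha hα)
    have harg : β * (b / β) + α * (a / α) = a + b := by
      field_simp; try ring
    rw [harg, add_comm β α] at h
    linarith
  · -- a < 0, b > 0
    have h := main_aux φ hconv hnonneg h0 hpos α β hα hβ
      (x := a / α) (y := b / β) (div_neg_of_neg_of_pos ha hα) (div_pos hb hβ)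
    have harg : α * (a / α) + β * (b / β) = a + b := by
      field_simp; try ring
    rw [harg] at h
    linarith
end

section
/- Let φ : ℝ → [0,∞) be convex with φ(0) = 0 and φ(-t)+φ(t) > 0 for t ≠ 0. If α, β, ω > 0 and a, b ∈ ℝ with a·b < 0, |a|/α ≥ ω and |b|/β ≥ ω, then α·φ(a/α) + β·φ(b/β) − (α+β)·φ((a+b)/(α+β)) ≥ (min{|a|,|b|}/ω)·(φ(−ω) + φ(ω)). -/
lemma chord_aux (φ : ℝ → ℝ) (hconv : ConvexOn ℝ Set.univ φ) (h0 : φ 0 = 0)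
    (x μ : ℝ) (hμ0 : 0 ≤ μ) (hμ1 : μ ≤ 1) : φ (μ * x) ≤ μ * φ x := by
  have h := hconv.2 (Set.mem_univ x) (Set.mem_univ (0 : ℝ)) hμ0 (by linarith : (0:ℝ) ≤ 1 - μ)
    (by ring)
  simpa [h0, smul_eq_mul] using h

lemma main_aux_s3 (φ : ℝ → ℝ) (hconv : ConvexOn ℝ Set.univ φ) (h0 : φ 0 = 0)
    (α β ω : ℝ) (hα : 0 < α) (hβ : 0 < β) (hω : 0 < ω)
    (a b : ℝ) (ha' : 0 < a) (hb' : b < 0) (ha : ω ≤ a / α) (hb : ω ≤ -b / β) :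
    (min a (-b) / ω) * (φ (-ω) + φ ω) ≤
      α * φ (a / α) + β * φ (b / β) - (α + β) * φ ((a + b) / (α + β)) := by
  have hb0 : b ≠ 0 := ne_of_lt hb'
  have ha0 : a ≠ 0 := ne_of_gt ha'
  have hnb : 0 < -b := by linarith
  have hαβ : 0 < α + β := by linarith
  have hωα : ω * α ≤ a := by
    rw [le_div_iff₀ hα] at ha; linarith
  have hωβ : ω * β ≤ -b := by
    rw [le_div_iff₀ hβ] at hb; linarith
  rcases le_or_gt 0 (a + b) with hs | hs
  · -- min = -b
    have hmin : min a (-b) = -b := min_eq_right (by linarith)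
    rw [hmin]
    -- h1 : (-b/ω) * φ (-ω) ≤ β * φ (b/β)
    have hc1 := chord_aux φ hconv h0 (b / β) (ω * β / (-b)) (by positivity)
      (by rw [div_le_one hnb]; linarith)
    rw [show ω * β / (-b) * (b / β) = -ω by field_simp] at hc1
    have h1 : (-b / ω) * φ (-ω) ≤ β * φ (b / β) := by
      have := mul_le_mul_of_nonneg_left hc1 (le_of_lt (div_pos hnb hω))
      calc (-b / ω) * φ (-ω) ≤ -b / ω * (ω * β / (-b) * φ (b / β)) := this
        _ = β * φ (b / β) := by field_simp
    -- h2 : (-b/ω) * φ ω ≤ (α*(-b)/a) * φ (a/α)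
    have hc2 := chord_aux φ hconv h0 (a / α) (ω * α / a) (by positivity)
      (by rw [div_le_one ha']; linarith)
    rw [show ω * α / a * (a / α) = ω by field_simp] at hc2
    have h2 : (-b / ω) * φ ω ≤ (α * (-b) / a) * φ (a / α) := by
      have := mul_le_mul_of_nonneg_left hc2 (le_of_lt (div_pos hnb hω))
      calc (-b / ω) * φ ω ≤ -b / ω * (ω * α / a * φ (a / α)) := this
        _ = (α * (-b) / a) * φ (a / α) := by field_simp
    -- h3 : (α+β) * φ ((a+b)/(α+β)) ≤ (α*(a+b)/a) * φ (a/α)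
    have hc3 := chord_aux φ hconv h0 (a / α) (α * (a + b) / (a * (α + β)))
      (by positivity)
      (by rw [div_le_one (by positivity)]; nlinarith)
    rw [show α * (a + b) / (a * (α + β)) * (a / α) = (a + b) / (α + β) by
      field_simp] at hc3
    have h3 : (α + β) * φ ((a + b) / (α + β)) ≤ (α * (a + b) / a) * φ (a / α) := by
      have := mul_le_mul_of_nonneg_left hc3 (le_of_lt hαβ)
      calc (α + β) * φ ((a + b) / (α + β))
          ≤ (α + β) * (α * (a + b) / (a * (α + β)) * φ (a / α)) := this
        _ = (α * (a + b) / a) * φ (a / α) := by field_simp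
    have hsplit : (α * (a + b) / a) * φ (a / α) + (α * (-b) / a) * φ (a / α)
        = α * φ (a / α) := by field_simp; ring
    have hx : (-b / ω) * (φ (-ω) + φ ω) = (-b / ω) * φ (-ω) + (-b / ω) * φ ω := by ring
    linarith
  · -- min = a
    have hmin : min a (-b) = a := min_eq_left (by linarith)
    rw [hmin]
    -- h1 : (a/ω) * φ ω ≤ α * φ (a/α)
    have hc1 := chord_aux φ hconv h0 (a / α) (ω * α / a) (by positivity)
      (by rw [div_le_one ha']; linarith)
    rw [show ω * α / a * (a / α) = ω by field_simp] at hc1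
    have h1 : (a / ω) * φ ω ≤ α * φ (a / α) := by
      have := mul_le_mul_of_nonneg_left hc1 (le_of_lt (div_pos ha' hω))
      calc (a / ω) * φ ω ≤ a / ω * (ω * α / a * φ (a / α)) := this
        _ = α * φ (a / α) := by field_simp
    -- h2 : (a/ω) * φ (-ω) ≤ (β*a/(-b)) * φ (b/β)
    have hc2 := chord_aux φ hconv h0 (b / β) (ω * β / (-b)) (by positivity)
      (by rw [div_le_one hnb]; linarith)
    rw [show ω * β / (-b) * (b / β) = -ω by field_simp] at hc2
    have h2 : (a / ω) * φ (-ω) ≤ (β * a / (-b)) * φ (b / β) := by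
      have := mul_le_mul_of_nonneg_left hc2 (le_of_lt (div_pos ha' hω))
      calc (a / ω) * φ (-ω) ≤ a / ω * (ω * β / (-b) * φ (b / β)) := this
        _ = (β * a / (-b)) * φ (b / β) := by field_simp
    -- h3 : (α+β) * φ ((a+b)/(α+β)) ≤ (β*(a+b)/b) * φ (b/β)
    have hc3 := chord_aux φ hconv h0 (b / β) (β * (a + b) / (b * (α + β)))
      (by
        rw [div_nonneg_iff]
        right
        exact ⟨by nlinarith, by nlinarith⟩)
      (by
        rw [div_le_one_iff]
        right; right
        exact ⟨by nlinarith, by nlinarith⟩)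
    rw [show β * (a + b) / (b * (α + β)) * (b / β) = (a + b) / (α + β) by
      field_simp] at hc3
    have h3 : (α + β) * φ ((a + b) / (α + β)) ≤ (β * (a + b) / b) * φ (b / β) := by
      have := mul_le_mul_of_nonneg_left hc3 (le_of_lt hαβ)
      calc (α + β) * φ ((a + b) / (α + β))
          ≤ (α + β) * (β * (a + b) / (b * (α + β)) * φ (b / β)) := this
        _ = (β * (a + b) / b) * φ (b / β) := by field_simp
    have hsplit : (β * (a + b) / b) * φ (b / β) + (β * a / (-b)) * φ (b / β)
        = β * φ (b / β) := by field_simp; ring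
    have hx : (a / ω) * (φ (-ω) + φ ω) = (a / ω) * φ (-ω) + (a / ω) * φ ω := by ring
    linarith

theorem stmt_3 (φ : ℝ → ℝ) (hconv : ConvexOn ℝ Set.univ φ)
    (hnonneg : ∀ t, 0 ≤ φ t) (h0 : φ 0 = 0)
    (hpos : ∀ t : ℝ, t ≠ 0 → 0 < φ (-t) + φ t)
    (α β ω : ℝ) (hα : 0 < α) (hβ : 0 < β) (hω : 0 < ω)
    (a b : ℝ) (hab : a * b < 0) (ha : ω ≤ |a| / α) (hb : ω ≤ |b| / β) :
    (min |a| |b| / ω) * (φ (-ω) + φ ω) ≤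
      α * φ (a / α) + β * φ (b / β) - (α + β) * φ ((a + b) / (α + β)) := by
  rcases mul_neg_iff.mp hab with ⟨ha1, hb1⟩ | ⟨ha1, hb1⟩
  · rw [abs_of_pos ha1] at ha ⊢
    rw [abs_of_neg hb1] at hb ⊢
    exact main_aux_s3 φ hconv h0 α β ω hα hβ hω a b ha1 hb1 ha hb
  · rw [abs_of_neg ha1] at ha ⊢
    rw [abs_of_pos hb1] at hb ⊢
    have := main_aux_s3 φ hconv h0 β α ω hβ hα hω b a hb1 ha1 hb ha
    rw [min_comm, add_comm β α, add_comm b a] at this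
    linarith
end

section
/- Let φ : ℝ → [0,∞) be even, convex, with φ(0)=0, twice continuously differentiable on (0,∞) with φ'' > 0 there. If a, b, α, β, ω > 0 satisfy ω ≤ a/α ≤ ω⁻¹ and ω ≤ b/β ≤ ω⁻¹, then α·φ(a/α) + β·φ(b/β) − (α+β)·φ((a+b)/(α+β)) ≥ (m·min{α²,β²}/(2(α+β)))·(a/α − b/β)², where m = min{φ''(t) : t ∈ [ω, ω⁻¹]}. -/
open Set Filter Topology

lemma phi_diff (φ : ℝ → ℝ) (hconv : ConvexOn ℝ Set.univ φ)
    (hderiv : ∀ t : ℝ, 0 < t → 0 < deriv (deriv φ) t) :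
    ∀ t : ℝ, 0 < t → DifferentiableAt ℝ φ t := by
  set g := deriv φ with hg
  have hgdiff : ∀ t : ℝ, 0 < t → DifferentiableAt ℝ g t := by
    intro t ht
    by_contra h
    have h0 : deriv g t = 0 := deriv_zero_of_not_differentiableAt h
    have := hderiv t ht
    rw [h0] at this
    exact lt_irrefl _ this
  have hgmono : StrictMonoOn g (Set.Ioi (0:ℝ)) := by
    apply strictMonoOn_of_deriv_pos (convex_Ioi 0)
    · exact fun t ht => (hgdiff t ht).continuousAt.continuousWithinAt
    · intro t ht
      rw [interior_Ioi] at ht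
      exact hderiv t ht
  intro t₀ ht₀
  by_contra hbad
  have hothers : ∀ s : ℝ, 0 < s → s ≠ t₀ → DifferentiableAt ℝ φ s := by
    intro s hs hne
    by_contra hs'
    have h1 : g s = 0 := deriv_zero_of_not_differentiableAt hs'
    have h2 : g t₀ = 0 := deriv_zero_of_not_differentiableAt hbad
    rcases lt_or_gt_of_ne hne with h | h
    · have := hgmono hs ht₀ h; rw [h1, h2] at this; exact lt_irrefl _ this
    · have := hgmono ht₀ hs h; rw [h1, h2] at this; exact lt_irrefl _ this
  have hgc : ContinuousAt g t₀ := (hgdiff t₀ ht₀).continuousAt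
  have htendR : Tendsto g (𝓝[>] t₀) (𝓝 (g t₀)) :=
    hgc.continuousWithinAt.tendsto
  have htendL : Tendsto g (𝓝[<] t₀) (𝓝 (g t₀)) :=
    hgc.continuousWithinAt.tendsto
  -- upper bound for left slopes
  have hub : ∀ s : ℝ, s ∈ Set.Ioo (0:ℝ) t₀ → slope φ t₀ s ≤ g t₀ := by
    intro s hs
    have key : ∀ u : ℝ, u ∈ Set.Ioi t₀ → slope φ t₀ s ≤ g u := by
      intro u hu
      have hu' : t₀ < u := hu
      have h1 : slope φ t₀ s ≤ slope φ t₀ u :=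
        hconv.slope_mono (Set.mem_univ t₀) ⟨Set.mem_univ s, Set.mem_singleton_iff.not.2 hs.2.ne⟩
          ⟨Set.mem_univ u, Set.mem_singleton_iff.not.2 hu'.ne'⟩ (hs.2.trans hu').le
      have h2 : slope φ t₀ u ≤ g u :=
        hconv.slope_le_deriv (Set.mem_univ t₀) (Set.mem_univ u) hu'
          (hothers u (ht₀.trans hu') hu'.ne')
      exact h1.trans h2
    exact ge_of_tendsto htendR (eventually_nhdsWithin_of_forall key)
  -- lower bound for right slopes
  have hlb : ∀ u : ℝ, u ∈ Set.Ioi t₀ → g t₀ ≤ slope φ t₀ u := by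
    intro u hu
    have hu' : t₀ < u := hu
    have key : ∀ s : ℝ, s ∈ Set.Ioo (0:ℝ) t₀ → g s ≤ slope φ t₀ u := by
      intro s hs
      have h1 : g s ≤ slope φ s t₀ :=
        hconv.deriv_le_slope (Set.mem_univ s) (Set.mem_univ t₀) hs.2
          (hothers s hs.1 hs.2.ne)
      have h2 : slope φ t₀ s ≤ slope φ t₀ u :=
        hconv.slope_mono (Set.mem_univ t₀) ⟨Set.mem_univ s, Set.mem_singleton_iff.not.2 hs.2.ne⟩
          ⟨Set.mem_univ u, Set.mem_singleton_iff.not.2 hu'.ne'⟩ (hs.2.trans hu').le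
      rw [slope_comm] at h1
      exact h1.trans h2
    refine le_of_tendsto htendL ?_
    filter_upwards [Ioo_mem_nhdsLT_of_mem (⟨ht₀, le_refl t₀⟩ : t₀ ∈ Set.Ioc (0:ℝ) t₀)] with s hs
    exact key s hs
  -- squeeze on the left
  have hsqL : Tendsto (slope φ t₀) (𝓝[<] t₀) (𝓝 (g t₀)) := by
    apply tendsto_of_tendsto_of_tendsto_of_le_of_le' htendL tendsto_const_nhds
    · filter_upwards [Ioo_mem_nhdsLT_of_mem (⟨ht₀, le_refl t₀⟩ : t₀ ∈ Set.Ioc (0:ℝ) t₀)] with s hs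
      have h1 : g s ≤ slope φ s t₀ :=
        hconv.deriv_le_slope (Set.mem_univ s) (Set.mem_univ t₀) hs.2 (hothers s hs.1 hs.2.ne)
      rwa [slope_comm] at h1
    · filter_upwards [Ioo_mem_nhdsLT_of_mem (⟨ht₀, le_refl t₀⟩ : t₀ ∈ Set.Ioc (0:ℝ) t₀)] with s hs
      exact hub s hs
  have hsqR : Tendsto (slope φ t₀) (𝓝[>] t₀) (𝓝 (g t₀)) := by
    apply tendsto_of_tendsto_of_tendsto_of_le_of_le' tendsto_const_nhds htendR
    · exact eventually_nhdsWithin_of_forall hlb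
    · apply eventually_nhdsWithin_of_forall
      intro u hu
      exact hconv.slope_le_deriv (Set.mem_univ t₀) (Set.mem_univ u) hu
        (hothers u (ht₀.trans hu) (ne_of_gt hu))
  have hT : Tendsto (slope φ t₀) (𝓝[≠] t₀) (𝓝 (g t₀)) := by
    rw [← nhdsLT_sup_nhdsGT t₀]
    exact Tendsto.sup hsqL hsqR
  exact hbad (hasDerivAt_iff_tendsto_slope.2 hT).differentiableAt

theorem stmt_4 (φ : ℝ → ℝ) (hconv : ConvexOn ℝ Set.univ φ)
    (hnonneg : ∀ t, 0 ≤ φ t) (h0 : φ 0 = 0) (heven : ∀ t, φ (-t) = φ t)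
    (hC2 : ContinuousOn (deriv (deriv φ)) (Set.Ioi (0 : ℝ)))
    (hderiv : ∀ t : ℝ, 0 < t → 0 < deriv (deriv φ) t)
    (a b α β ω m : ℝ) (ha : 0 < a) (hb : 0 < b) (hα : 0 < α) (hβ : 0 < β) (hω : 0 < ω)
    (haω : ω ≤ a / α) (haω' : a / α ≤ ω⁻¹) (hbω : ω ≤ b / β) (hbω' : b / β ≤ ω⁻¹)
    (hm : IsLeast (deriv (deriv φ) '' Set.Icc ω ω⁻¹) m) :
    (m * min (α ^ 2) (β ^ 2) / (2 * (α + β))) * (a / α - b / β) ^ 2 ≤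
      α * φ (a / α) + β * φ (b / β) - (α + β) * φ ((a + b) / (α + β)) := by
  have hsub : Set.Icc ω ω⁻¹ ⊆ Set.Ioi (0:ℝ) := fun t ht => lt_of_lt_of_le hω ht.1
  have hφd := phi_diff φ hconv hderiv
  have hgdiff : ∀ t : ℝ, 0 < t → DifferentiableAt ℝ (deriv φ) t := by
    intro t ht
    by_contra h
    have h0' : deriv (deriv φ) t = 0 := deriv_zero_of_not_differentiableAt h
    have := hderiv t ht
    rw [h0'] at this
    exact lt_irrefl _ this
  have hm0 : 0 < m := by
    obtain ⟨t, ht, rfl⟩ := hm.1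
    exact hderiv t (hsub ht)
  have hmle : ∀ t ∈ Set.Icc ω ω⁻¹, m ≤ deriv (deriv φ) t := fun t ht => hm.2 ⟨t, ht, rfl⟩
  set ψ : ℝ → ℝ := fun t => φ t - m/2 * t^2 with hψdef
  have hq : ∀ t : ℝ, HasDerivAt (fun s : ℝ => m/2 * s^2) (m * t) t := by
    intro t
    have h := (hasDerivAt_pow 2 t).const_mul (m/2)
    refine h.congr_deriv ?_
    push_cast
    ring
  have hdψ : ∀ t : ℝ, 0 < t → HasDerivAt ψ (deriv φ t - m * t) t :=
    fun t ht => ((hφd t ht).hasDerivAt.sub (hq t))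
  have hEq : ∀ t : ℝ, 0 < t → (deriv ψ) =ᶠ[nhds t] (fun s => deriv φ s - m * s) := by
    intro t ht
    filter_upwards [Ioi_mem_nhds ht] with s hs
    exact (hdψ s hs).deriv
  have hg2 : ∀ t : ℝ, 0 < t → DifferentiableAt ℝ (fun s => deriv φ s - m * s) t :=
    fun t ht => (hgdiff t ht).sub (by fun_prop)
  have hψconv : ConvexOn ℝ (Set.Icc ω ω⁻¹) ψ := by
    apply convexOn_of_deriv2_nonneg (convex_Icc _ _)
    · exact fun t ht => ((hφd t (hsub ht)).sub (by fun_prop)).continuousAt.continuousWithinAt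
    · rw [interior_Icc]
      intro t ht
      have ht' : 0 < t := hω.trans ht.1
      exact ((hφd t ht').sub (by fun_prop)).differentiableWithinAt
    · rw [interior_Icc]
      intro t ht
      have ht' : 0 < t := hω.trans ht.1
      exact ((hg2 t ht').congr_of_eventuallyEq (hEq t ht')).differentiableWithinAt
    · rw [interior_Icc]
      intro t ht
      have ht' : 0 < t := hω.trans ht.1
      have e1 : deriv (deriv ψ) t = deriv (fun s => deriv φ s - m * s) t :=
        Filter.EventuallyEq.deriv_eq (hEq t ht')
      have e2 : deriv (fun s => deriv φ s - m * s) t = deriv (deriv φ) t - m := by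
        have h' : HasDerivAt (fun s => deriv φ s - m * s) (deriv (deriv φ) t - m * 1) t :=
          (hgdiff t ht').hasDerivAt.sub ((hasDerivAt_id t).const_mul m)
        simpa using h'.deriv
      show (0:ℝ) ≤ deriv^[2] ψ t
      have e3 : deriv^[2] ψ t = deriv (deriv ψ) t := by
        simp [Function.iterate_succ_apply']
      rw [e3, e1, e2]
      have := hmle t ⟨ht.1.le, ht.2.le⟩
      linarith
  -- apply convexity of ψ
  have hs : 0 < α + β := by linarith
  set x := a/α with hxdef
  set y := b/β with hydef
  have hx : x ∈ Set.Icc ω ω⁻¹ := ⟨haω, haω'⟩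
  have hy : y ∈ Set.Icc ω ω⁻¹ := ⟨hbω, hbω'⟩
  set A := α/(α+β) with hAdef
  set B := β/(α+β) with hBdef
  have hA : 0 ≤ A := by positivity
  have hB : 0 ≤ B := by positivity
  have hAB : A + B = 1 := by rw [hAdef, hBdef]; field_simp
  have key := hψconv.2 hx hy hA hB hAB
  simp only [smul_eq_mul] at key
  have hc : A * x + B * y = (a+b)/(α+β) := by
    rw [hxdef, hydef, hAdef, hBdef]
    field_simp
  rw [hc] at key
  have e1 : (α+β) * (A * ψ x + B * ψ y) = α * ψ x + β * ψ y := by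
    rw [hAdef, hBdef]; field_simp
  have key2 : (α+β) * ψ ((a+b)/(α+β)) ≤ α * ψ x + β * ψ y := by
    rw [← e1]
    exact mul_le_mul_of_nonneg_left key hs.le
  simp only [hψdef] at key2
  have hid2 : m/2*(α*x^2 + β*y^2 - (α+β)*((a+b)/(α+β))^2) =
      m*(α*β)/(2*(α+β))*(x-y)^2 := by
    rw [hxdef, hydef]
    have h1 : α ≠ 0 := ne_of_gt hα
    have h2 : β ≠ 0 := ne_of_gt hβ
    have h3 : α + β ≠ 0 := ne_of_gt hs
    field_simp
    ring
  have hminle : min (α^2) (β^2) ≤ α*β := by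
    rcases le_total α β with h|h
    · exact (min_le_left _ _).trans (by rw [pow_two]; exact mul_le_mul_of_nonneg_left h hα.le)
    · exact (min_le_right _ _).trans (by rw [pow_two]; exact mul_le_mul_of_nonneg_right h hβ.le)
  have step1 : m * min (α^2) (β^2) / (2*(α+β)) * (x-y)^2 ≤
      m*(α*β)/(2*(α+β))*(x-y)^2 := by
    gcongr
  refine step1.trans ?_
  linarith [key2, hid2]
end

section
/- If K is an o-symmetric convex body in ℝⁿ with axial rotational symmetry around the line l through the origin, then the Banach–Mazur distance from K to the Euclidean ball satisfies δ_BM(K, Bⁿ) = min{ln λ : λ ≥ 1, E ⊆ K ⊆ λE for some o-symmetric ellipsoid E with axial rotational symmetry around l}. -/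
open Pointwise
set_option linter.unusedSectionVars false

variable {E : Type*} [NormedAddCommGroup E] [InnerProductSpace ℝ E] [FiniteDimensional ℝ E]

local notation "⟪" x ", " y "⟫" => @inner ℝ _ _ x y

/-- there is a unit vector orthogonal to u when dim ≥ 2 -/
lemma aux_exists_unit_orthogonal (hd : 2 ≤ Module.finrank ℝ E) (u : E) :
    ∃ e : E, ‖e‖ = 1 ∧ ⟪u, e⟫ = 0 := by
  have hne : (ℝ ∙ u)ᗮ ≠ ⊥ := by
    intro hbot
    have h1 : Module.finrank ℝ (ℝ ∙ u) + Module.finrank ℝ (ℝ ∙ u)ᗮ = Module.finrank ℝ E :=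
      Submodule.finrank_add_finrank_orthogonal _
    rw [hbot, finrank_bot, add_zero] at h1
    have h2 : Module.finrank ℝ (ℝ ∙ u) ≤ 1 := by
      rcases eq_or_ne u 0 with h | h
      · rw [h, Submodule.span_zero_singleton]; simp
      · rw [finrank_span_singleton h]
    omega
  obtain ⟨v, hv, hv0⟩ := Submodule.exists_mem_ne_zero_of_ne_bot hne
  refine ⟨‖v‖⁻¹ • v, ?_, ?_⟩
  · rw [norm_smul, norm_inv, norm_norm, inv_mul_cancel₀ (norm_ne_zero_iff.mpr hv0)]
  · rw [inner_smul_right]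
    have : ⟪u, v⟫ = 0 :=
      (Submodule.mem_orthogonal _ v).mp hv u (Submodule.mem_span_singleton_self u)
    rw [this, mul_zero]

/-- isometry fixing u mapping w to w' -/
lemma aux_exists_isometry (u w w' : E) (hw : ⟪u, w⟫ = 0) (hw' : ⟪u, w'⟫ = 0)
    (hnorm : ‖w‖ = ‖w'‖) : ∃ f : E ≃ₗᵢ[ℝ] E, f u = u ∧ f w = w' := by
  refine ⟨Submodule.reflection (ℝ ∙ (w - w'))ᗮ, ?_, Submodule.reflection_sub hnorm⟩
  apply Submodule.reflection_mem_subspace_eq_self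
  rw [Submodule.mem_orthogonal_singleton_iff_inner_right, inner_sub_left,
    real_inner_comm u w, real_inner_comm u w', hw, hw', sub_zero]

/-- two isometries fixing u and rotating the orthogonal part of z onto ±‖·‖ • e -/
lemma aux_decomp (u e : E) (hu : ‖u‖ = 1) (he1 : ‖e‖ = 1) (he2 : ⟪u, e⟫ = 0) (z : E) :
    ∃ g₁ g₂ : E ≃ₗᵢ[ℝ] E, g₁ u = u ∧ g₂ u = u ∧
      g₁ z = ⟪u, z⟫ • u + ‖z - ⟪u, z⟫ • u‖ • e ∧
      g₂ z = ⟪u, z⟫ • u - ‖z - ⟪u, z⟫ • u‖ • e := by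
  set s : ℝ := ⟪u, z⟫ with hs
  set w : E := z - s • u with hw
  set t : ℝ := ‖w‖ with ht
  have huu : ⟪u, u⟫ = (1 : ℝ) := by
    rw [real_inner_self_eq_norm_sq, hu]; norm_num
  have hworth : ⟪u, w⟫ = 0 := by
    rw [hw, inner_sub_right, real_inner_smul_right, huu, hs]; ring
  have hn1 : ‖w‖ = ‖t • e‖ := by
    rw [norm_smul, he1, ht, mul_one, Real.norm_eq_abs, abs_of_nonneg (norm_nonneg w)]
  have hn2 : ‖w‖ = ‖(-t) • e‖ := by
    rw [norm_smul, he1, mul_one, Real.norm_eq_abs, abs_neg, ht,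
      abs_of_nonneg (norm_nonneg w)]
  have ho1 : ⟪u, t • e⟫ = 0 := by rw [real_inner_smul_right, he2]; ring
  have ho2 : ⟪u, (-t) • e⟫ = 0 := by rw [real_inner_smul_right, he2]; ring
  obtain ⟨g₁, hg₁u, hg₁w⟩ := aux_exists_isometry u w (t • e) hworth ho1 hn1
  obtain ⟨g₂, hg₂u, hg₂w⟩ := aux_exists_isometry u w ((-t) • e) hworth ho2 hn2
  have hzdec : z = s • u + w := by rw [hw]; abel
  refine ⟨g₁, g₂, hg₁u, hg₂u, ?_, ?_⟩
  · rw [hzdec, map_add, LinearIsometryEquiv.map_smul, hg₁u, hg₁w]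
  · rw [hzdec, map_add, LinearIsometryEquiv.map_smul, hg₂u, hg₂w, neg_smul]
    abel

/-- parallelogram identity for a linear map applied to s•u ± t•e -/
lemma aux_par (ψ : E ≃ₗ[ℝ] E) (u e : E) (s t : ℝ) :
    ‖ψ (s • u + t • e)‖ ^ 2 + ‖ψ (s • u - t • e)‖ ^ 2 =
      2 * (‖ψ u‖ ^ 2 * s ^ 2 + ‖ψ e‖ ^ 2 * t ^ 2) := by
  rw [map_add, map_sub, map_smul, map_smul, norm_add_sq_real, norm_sub_sq_real,
    norm_smul, norm_smul]
  simp only [Real.norm_eq_abs, mul_pow, sq_abs]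
  ring

/-- the quadratic form scales as expected -/
lemma aux_F_smul (u : E) (hu : ‖u‖ = 1) (A B r : ℝ) (z : E) :
    A * ⟪u, r • z⟫ ^ 2 + B * ‖r • z - ⟪u, r • z⟫ • u‖ ^ 2 =
      r ^ 2 * (A * ⟪u, z⟫ ^ 2 + B * ‖z - ⟪u, z⟫ • u‖ ^ 2) := by
  have h1 : ⟪u, r • z⟫ = r * ⟪u, z⟫ := real_inner_smul_right u z r
  have h2 : r • z - (r * ⟪u, z⟫) • u = r • (z - ⟪u, z⟫ • u) := by module
  rw [h1, h2, norm_smul]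
  simp only [Real.norm_eq_abs, mul_pow, sq_abs]
  ring

/-- the quadratic form is invariant under isometries fixing u -/
lemma aux_F_iso (u : E) (f : E ≃ₗᵢ[ℝ] E) (hf : f u = u) (A B : ℝ) (z : E) :
    A * ⟪u, f z⟫ ^ 2 + B * ‖f z - ⟪u, f z⟫ • u‖ ^ 2 =
      A * ⟪u, z⟫ ^ 2 + B * ‖z - ⟪u, z⟫ • u‖ ^ 2 := by
  have h1 : ⟪u, f z⟫ = ⟪u, z⟫ := by
    conv_lhs => rw [← hf]
    exact f.inner_map_map u z
  have h2 : ‖f z - ⟪u, z⟫ • u‖ = ‖z - ⟪u, z⟫ • u‖ := by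
    have : f z - ⟪u, z⟫ • u = f (z - ⟪u, z⟫ • u) := by
      rw [LinearIsometryEquiv.map_sub, LinearIsometryEquiv.map_smul, hf]
    rw [this, LinearIsometryEquiv.norm_map]
  rw [h1, h2]
noncomputable def smap (u : E) (c d : ℝ) : E →ₗ[ℝ] E :=
  d • LinearMap.id + (c - d) • ((innerSL ℝ u).toLinearMap.smulRight u)

lemma smap_apply (u : E) (c d : ℝ) (z : E) :
    smap u c d z = (c * ⟪u, z⟫) • u + d • (z - ⟪u, z⟫ • u) := by
  simp only [smap, LinearMap.add_apply, LinearMap.smul_apply, LinearMap.id_apply,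
    LinearMap.smulRight_apply, ContinuousLinearMap.coe_coe, innerSL_apply_apply]
  module

lemma smap_smap (u : E) (hu : ‖u‖ = 1) (c d c' d' : ℝ) (z : E) :
    smap u c d (smap u c' d' z) = smap u (c * c') (d * d') z := by
  have huu : ⟪u, u⟫ = (1 : ℝ) := by
    rw [real_inner_self_eq_norm_sq, hu]; norm_num
  have hinner : ⟪u, smap u c' d' z⟫ = c' * ⟪u, z⟫ := by
    rw [smap_apply, inner_add_right, inner_smul_right, inner_smul_right, inner_sub_right,
      inner_smul_right, huu]
    ring
  rw [smap_apply, hinner, smap_apply, smap_apply]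
  rw [smul_sub, smul_add, smul_smul, smul_smul, smul_sub, smul_smul]
  module

lemma smap_one_one (u : E) (hu : ‖u‖ = 1) (z : E) : smap u 1 1 z = z := by
  rw [smap_apply]
  simp

noncomputable def tmap (u : E) (hu : ‖u‖ = 1) (c d : ℝ) (hc : c ≠ 0) (hd : d ≠ 0) :
    E ≃ₗ[ℝ] E :=
  LinearEquiv.ofLinear (smap u c d) (smap u c⁻¹ d⁻¹)
    (by ext z
        simp only [LinearMap.comp_apply, LinearMap.id_apply]
        rw [smap_smap u hu, mul_inv_cancel₀ hc, mul_inv_cancel₀ hd, smap_one_one u hu])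
    (by ext z
        simp only [LinearMap.comp_apply, LinearMap.id_apply]
        rw [smap_smap u hu, inv_mul_cancel₀ hc, inv_mul_cancel₀ hd, smap_one_one u hu])

lemma tmap_apply (u : E) (hu : ‖u‖ = 1) (c d : ℝ) (hc : c ≠ 0) (hd : d ≠ 0) (z : E) :
    tmap u hu c d hc hd z = (c * ⟪u, z⟫) • u + d • (z - ⟪u, z⟫ • u) := smap_apply u c d z

lemma tmap_symm_apply (u : E) (hu : ‖u‖ = 1) (c d : ℝ) (hc : c ≠ 0) (hd : d ≠ 0) (z : E) :
    (tmap u hu c d hc hd).symm z = (c⁻¹ * ⟪u, z⟫) • u + d⁻¹ • (z - ⟪u, z⟫ • u) :=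
  smap_apply u c⁻¹ d⁻¹ z

lemma norm_sq_smap (u : E) (hu : ‖u‖ = 1) (c d : ℝ) (z : E) :
    ‖(c * ⟪u, z⟫) • u + d • (z - ⟪u, z⟫ • u)‖ ^ 2 =
      c ^ 2 * ⟪u, z⟫ ^ 2 + d ^ 2 * ‖z - ⟪u, z⟫ • u‖ ^ 2 := by
  have huu : ⟪u, u⟫ = (1 : ℝ) := by
    rw [real_inner_self_eq_norm_sq, hu]; norm_num
  have hw : ⟪u, z - ⟪u, z⟫ • u⟫ = 0 := by
    rw [inner_sub_right, inner_smul_right, huu]; ring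
  have horth : ⟪(c * ⟪u, z⟫) • u, d • (z - ⟪u, z⟫ • u)⟫ = 0 := by
    rw [inner_smul_left, inner_smul_right, hw]; simp
  rw [norm_add_sq_real, horth]
  rw [norm_smul, norm_smul, hu]
  simp only [Real.norm_eq_abs, mul_one, mul_pow, sq_abs, mul_zero, add_zero]

lemma aux_mem_tmap (u : E) (hu : ‖u‖ = 1) (c d : ℝ) (hc : c ≠ 0) (hd : d ≠ 0) (z : E) :
    z ∈ (tmap u hu c d hc hd) '' Metric.closedBall 0 1 ↔
      (c⁻¹) ^ 2 * ⟪u, z⟫ ^ 2 + (d⁻¹) ^ 2 * ‖z - ⟪u, z⟫ • u‖ ^ 2 ≤ 1 := by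
  have himg : z ∈ (tmap u hu c d hc hd) '' Metric.closedBall 0 1 ↔
      (tmap u hu c d hc hd).symm z ∈ Metric.closedBall (0 : E) 1 := by
    constructor
    · rintro ⟨w, hw, rfl⟩; simpa using hw
    · intro h; exact ⟨(tmap u hu c d hc hd).symm z, h, by simp⟩
  rw [himg, mem_closedBall_zero_iff,
    ← pow_le_one_iff_of_nonneg (norm_nonneg _) (two_ne_zero), tmap_symm_apply,
    norm_sq_smap u hu]

theorem stmt_10 (n : ℕ) (hn : 2 ≤ n) (u : EuclideanSpace ℝ (Fin n)) (hu : ‖u‖ = 1)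
    (K : Set (EuclideanSpace ℝ (Fin n)))
    (hKcomp : IsCompact K) (hKconv : Convex ℝ K)
    (hKint : (0 : EuclideanSpace ℝ (Fin n)) ∈ interior K)
    (hKsymm : ∀ x ∈ K, -x ∈ K)
    (hKrot : ∀ f : EuclideanSpace ℝ (Fin n) ≃ₗᵢ[ℝ] EuclideanSpace ℝ (Fin n),
      f u = u → f '' K = K) :
    sInf {l : ℝ | 0 ≤ l ∧
      ∃ (Φ : EuclideanSpace ℝ (Fin n) ≃ₗ[ℝ] EuclideanSpace ℝ (Fin n))
        (x y : EuclideanSpace ℝ (Fin n)),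
        (fun z => z - x) '' K ⊆
          Φ '' ((fun z => z - y) '' Metric.closedBall 0 1) ∧
        Φ '' ((fun z => z - y) '' Metric.closedBall 0 1) ⊆
          Real.exp l • ((fun z => z - x) '' K)} =
    sInf {l : ℝ | ∃ lam : ℝ, 1 ≤ lam ∧ l = Real.log lam ∧
      ∃ T : EuclideanSpace ℝ (Fin n) ≃ₗ[ℝ] EuclideanSpace ℝ (Fin n),
        (∀ f : EuclideanSpace ℝ (Fin n) ≃ₗᵢ[ℝ] EuclideanSpace ℝ (Fin n), f u = u →
          f '' (T '' Metric.closedBall 0 1) = T '' Metric.closedBall 0 1) ∧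
        T '' Metric.closedBall 0 1 ⊆ K ∧ K ⊆ lam • (T '' Metric.closedBall 0 1)} := by
  congr 1
  apply Set.Subset.antisymm
  · -- hard direction: LHS set ⊆ RHS set
    rintro l ⟨hl0, Φ, x, y, h1, h2⟩
    -- centering step 1: K ⊆ {‖Φ.symm ·‖ ≤ 1}
    have hKB : ∀ k ∈ K, ‖Φ.symm k‖ ≤ 1 := by
      intro k hk
      obtain ⟨w₁y, ⟨w₁, hw₁, rfl⟩, e1⟩ := h1 ⟨k, hk, rfl⟩
      obtain ⟨w₂y, ⟨w₂, hw₂, rfl⟩, e2⟩ := h1 ⟨-k, hKsymm k hk, rfl⟩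
      have e1b : Φ (w₁ - y) = k - x := e1
      have e2b : Φ (w₂ - y) = -k - x := e2
      have e1' : Φ.symm (k - x) = w₁ - y := by rw [← e1b]; simp
      have e2' : Φ.symm (-k - x) = w₂ - y := by rw [← e2b]; simp
      have key : Φ.symm k + Φ.symm k = w₁ - w₂ := by
        have h' : Φ.symm ((k - x) - (-k - x)) = (w₁ - y) - (w₂ - y) := by
          rw [map_sub, e1', e2']
        have h'' : (k - x) - (-k - x) = k + k := by abel
        rw [h'', map_add] at h'
        rw [h']; abel
      have hn1 : ‖w₁‖ ≤ 1 := mem_closedBall_zero_iff.mp hw₁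
      have hn2 : ‖w₂‖ ≤ 1 := mem_closedBall_zero_iff.mp hw₂
      have h2n : ‖Φ.symm k + Φ.symm k‖ = 2 * ‖Φ.symm k‖ := by
        rw [← two_smul ℝ, norm_smul]; simp
      have hle : ‖w₁ - w₂‖ ≤ 2 := le_trans (norm_sub_le _ _) (by linarith)
      rw [← key, h2n] at hle
      linarith
    -- centering step 2: {‖Φ.symm ·‖ ≤ 1} ⊆ exp l • K
    have hBK : ∀ z : EuclideanSpace ℝ (Fin n), ‖Φ.symm z‖ ≤ 1 → z ∈ Real.exp l • K := by
      intro z hz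
      have hwb : Φ.symm z ∈ Metric.closedBall (0 : EuclideanSpace ℝ (Fin n)) 1 :=
        mem_closedBall_zero_iff.mpr hz
      have hwb' : -Φ.symm z ∈ Metric.closedBall (0 : EuclideanSpace ℝ (Fin n)) 1 :=
        mem_closedBall_zero_iff.mpr (by rwa [norm_neg])
      obtain ⟨k₁x, ⟨k₁, hk₁, rfl⟩, f1⟩ := h2 ⟨Φ.symm z - y, ⟨Φ.symm z, hwb, rfl⟩, rfl⟩
      obtain ⟨k₂x, ⟨k₂, hk₂, rfl⟩, f2⟩ := h2 ⟨-Φ.symm z - y, ⟨-Φ.symm z, hwb', rfl⟩, rfl⟩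
      have f1b : Φ (Φ.symm z - y) = Real.exp l • (k₁ - x) := f1.symm
      have f2b : Φ (-Φ.symm z - y) = Real.exp l • (k₂ - x) := f2.symm
      have hzw : z = Φ (Φ.symm z) := by simp
      have key : z + z = Real.exp l • (k₁ - k₂) := by
        have h' : Φ ((Φ.symm z - y) - (-Φ.symm z - y)) =
            Real.exp l • (k₁ - x) - Real.exp l • (k₂ - x) := by
          rw [map_sub, f1b, f2b]
        have h'' : (Φ.symm z - y) - (-Φ.symm z - y) = Φ.symm z + Φ.symm z := by abel
        rw [h'', map_add, ← hzw] at h'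
        rw [h', smul_sub, smul_sub, smul_sub]
        abel
      have hmid : (2⁻¹ : ℝ) • k₁ + (2⁻¹ : ℝ) • (-k₂) ∈ K :=
        hKconv hk₁ (hKsymm k₂ hk₂) (by norm_num) (by norm_num) (by norm_num)
      refine ⟨(2⁻¹ : ℝ) • k₁ + (2⁻¹ : ℝ) • (-k₂), hmid, ?_⟩
      have hz2 : z = (2⁻¹ : ℝ) • (z + z) := by module
      rw [hz2, key]
      module
    -- a unit vector orthogonal to u
    obtain ⟨e, he1, he2⟩ := aux_exists_unit_orthogonal
      (by rw [finrank_euclideanSpace_fin]; exact hn) u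
    have hα : (0 : ℝ) < ‖Φ.symm u‖ := by
      rw [norm_pos_iff]
      intro h0
      have hu0 : u = 0 := by
        have := congrArg Φ h0
        simpa using this
      rw [hu0] at hu; simp at hu
    have hβ : (0 : ℝ) < ‖Φ.symm e‖ := by
      rw [norm_pos_iff]
      intro h0
      have he0 : e = 0 := by
        have := congrArg Φ h0
        simpa using this
      rw [he0] at he1; simp at he1
    -- core1 : K sits inside the symmetrized ellipsoid
    have core1 : ∀ z ∈ K, ‖Φ.symm u‖ ^ 2 * ⟪u, z⟫ ^ 2 +
        ‖Φ.symm e‖ ^ 2 * ‖z - ⟪u, z⟫ • u‖ ^ 2 ≤ 1 := by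
      intro z hz
      obtain ⟨g₁, g₂, hg₁u, hg₂u, hg₁z, hg₂z⟩ := aux_decomp u e hu he1 he2 z
      have m1 : g₁ z ∈ K := by rw [← hKrot g₁ hg₁u]; exact ⟨z, hz, rfl⟩
      have m2 : g₂ z ∈ K := by rw [← hKrot g₂ hg₂u]; exact ⟨z, hz, rfl⟩
      have sq1 : ‖Φ.symm (g₁ z)‖ ^ 2 ≤ 1 := pow_le_one₀ (norm_nonneg _) (hKB _ m1)
      have sq2 : ‖Φ.symm (g₂ z)‖ ^ 2 ≤ 1 := pow_le_one₀ (norm_nonneg _) (hKB _ m2)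
      rw [hg₁z] at sq1
      rw [hg₂z] at sq2
      have hpar := aux_par Φ.symm u e ⟪u, z⟫ ‖z - ⟪u, z⟫ • u‖
      linarith
    -- core2 : the symmetrized ellipsoid sits inside exp l • K
    have core2 : ∀ z : EuclideanSpace ℝ (Fin n), ‖Φ.symm u‖ ^ 2 * ⟪u, z⟫ ^ 2 +
        ‖Φ.symm e‖ ^ 2 * ‖z - ⟪u, z⟫ • u‖ ^ 2 ≤ 1 → z ∈ Real.exp l • K := by
      intro z hz
      obtain ⟨g₁, g₂, hg₁u, hg₂u, hg₁z, hg₂z⟩ := aux_decomp u e hu he1 he2 z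
      have hpar := aux_par Φ.symm u e ⟪u, z⟫ ‖z - ⟪u, z⟫ • u‖
      have hmin : ‖Φ.symm (g₁ z)‖ ≤ 1 ∨ ‖Φ.symm (g₂ z)‖ ≤ 1 := by
        rw [hg₁z, hg₂z]
        by_contra hcon
        push_neg at hcon
        nlinarith [hcon.1, hcon.2, hpar, hz,
          norm_nonneg (Φ.symm (⟪u, z⟫ • u + ‖z - ⟪u, z⟫ • u‖ • e)),
          norm_nonneg (Φ.symm (⟪u, z⟫ • u - ‖z - ⟪u, z⟫ • u‖ • e))]
      rcases hmin with hm | hm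
      · obtain ⟨k, hk, hkeq⟩ := hBK _ hm
        have hgsu : g₁.symm u = u := by
          conv_lhs => rw [← hg₁u]
          exact g₁.symm_apply_apply u
        refine ⟨g₁.symm k, by rw [← hKrot g₁.symm hgsu]; exact ⟨k, hk, rfl⟩, ?_⟩
        show Real.exp l • g₁.symm k = z
        rw [← LinearIsometryEquiv.map_smul]
        rw [show Real.exp l • k = g₁ z from hkeq]
        exact g₁.symm_apply_apply z
      · obtain ⟨k, hk, hkeq⟩ := hBK _ hm
        have hgsu : g₂.symm u = u := by
          conv_lhs => rw [← hg₂u]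
          exact g₂.symm_apply_apply u
        refine ⟨g₂.symm k, by rw [← hKrot g₂.symm hgsu]; exact ⟨k, hk, rfl⟩, ?_⟩
        show Real.exp l • g₂.symm k = z
        rw [← LinearIsometryEquiv.map_smul]
        rw [show Real.exp l • k = g₂ z from hkeq]
        exact g₂.symm_apply_apply z
    -- construct the invariant ellipsoid map
    have hc : Real.exp (-l) * ‖Φ.symm u‖⁻¹ ≠ 0 :=
      mul_ne_zero (Real.exp_ne_zero _) (inv_ne_zero hα.ne')
    have hd : Real.exp (-l) * ‖Φ.symm e‖⁻¹ ≠ 0 :=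
      mul_ne_zero (Real.exp_ne_zero _) (inv_ne_zero hβ.ne')
    have hcinv : (Real.exp (-l) * ‖Φ.symm u‖⁻¹)⁻¹ = Real.exp l * ‖Φ.symm u‖ := by
      rw [mul_inv, inv_inv, Real.exp_neg, inv_inv]
    have hdinv : (Real.exp (-l) * ‖Φ.symm e‖⁻¹)⁻¹ = Real.exp l * ‖Φ.symm e‖ := by
      rw [mul_inv, inv_inv, Real.exp_neg, inv_inv]
    have hee : Real.exp l * Real.exp (-l) = 1 := by
      rw [← Real.exp_add]; simp
    -- membership in the ellipsoid
    have memT : ∀ z : EuclideanSpace ℝ (Fin n),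
        z ∈ (tmap u hu _ _ hc hd) '' Metric.closedBall 0 1 ↔
        Real.exp l ^ 2 * (‖Φ.symm u‖ ^ 2 * ⟪u, z⟫ ^ 2 +
          ‖Φ.symm e‖ ^ 2 * ‖z - ⟪u, z⟫ • u‖ ^ 2) ≤ 1 := by
      intro z
      rw [aux_mem_tmap]
      have heq : (Real.exp (-l) * ‖Φ.symm u‖⁻¹)⁻¹ ^ 2 * ⟪u, z⟫ ^ 2 +
          (Real.exp (-l) * ‖Φ.symm e‖⁻¹)⁻¹ ^ 2 * ‖z - ⟪u, z⟫ • u‖ ^ 2 =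
          Real.exp l ^ 2 * (‖Φ.symm u‖ ^ 2 * ⟪u, z⟫ ^ 2 +
          ‖Φ.symm e‖ ^ 2 * ‖z - ⟪u, z⟫ • u‖ ^ 2) := by
        rw [hcinv, hdinv]; ring
      rw [heq]
    refine ⟨Real.exp l, Real.one_le_exp hl0, (Real.log_exp l).symm, tmap u hu _ _ hc hd,
      ?_, ?_, ?_⟩
    · -- invariance under isometries fixing u
      intro f hf
      ext z
      constructor
      · rintro ⟨v, hv, rfl⟩
        rw [memT]
        rw [aux_F_iso u f hf]
        exact (memT v).mp hv
      · intro hz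
        refine ⟨f.symm z, ?_, f.apply_symm_apply z⟩
        rw [memT]
        have hinv2 := aux_F_iso u f hf (‖Φ.symm u‖ ^ 2) (‖Φ.symm e‖ ^ 2) (f.symm z)
        rw [f.apply_symm_apply] at hinv2
        rw [← hinv2]
        exact (memT z).mp hz
    · -- T(ball) ⊆ K
      intro z hz
      rw [memT] at hz
      have h1 : ‖Φ.symm u‖ ^ 2 * ⟪u, Real.exp l • z⟫ ^ 2 +
          ‖Φ.symm e‖ ^ 2 * ‖Real.exp l • z - ⟪u, Real.exp l • z⟫ • u‖ ^ 2 ≤ 1 := by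
        rw [aux_F_smul u hu]
        exact hz
      obtain ⟨k, hk, hkeq⟩ := core2 _ h1
      have hzk : k = z := smul_right_injective _ (Real.exp_pos l).ne' hkeq
      rw [← hzk]; exact hk
    · -- K ⊆ exp l • T(ball)
      intro z hz
      refine ⟨Real.exp (-l) • z, ?_, ?_⟩
      · rw [memT, aux_F_smul u hu]
        have heq2 : Real.exp l ^ 2 * (Real.exp (-l) ^ 2 *
            (‖Φ.symm u‖ ^ 2 * ⟪u, z⟫ ^ 2 + ‖Φ.symm e‖ ^ 2 * ‖z - ⟪u, z⟫ • u‖ ^ 2)) =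
            (Real.exp l * Real.exp (-l)) ^ 2 *
            (‖Φ.symm u‖ ^ 2 * ⟪u, z⟫ ^ 2 + ‖Φ.symm e‖ ^ 2 * ‖z - ⟪u, z⟫ • u‖ ^ 2) := by
          ring
        rw [heq2, hee, one_pow, one_mul]
        exact core1 z hz
      · show Real.exp l • (Real.exp (-l) • z) = z
        rw [smul_smul, hee, one_smul]
  · -- easy direction: RHS set ⊆ LHS set
    rintro l ⟨lam, hlam, rfl, T, hinv, hTK, hKT⟩
    have hlam0 : (0 : ℝ) < lam := lt_of_lt_of_le one_pos hlam
    have h0 : ∀ S : Set (EuclideanSpace ℝ (Fin n)),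
        (fun z => z - (0 : EuclideanSpace ℝ (Fin n))) '' S = S := by
      intro S; simp
    have himg2 : (T.trans (LinearEquiv.smulOfNeZero ℝ _ lam hlam0.ne')) ''
        Metric.closedBall 0 1 = lam • (T '' Metric.closedBall 0 1) := by
      rw [← Set.image_smul, ← Set.image_comp]
      apply Set.image_congr
      intro a _
      simp [LinearEquiv.smulOfNeZero_apply]
    refine ⟨Real.log_nonneg hlam,
      T.trans (LinearEquiv.smulOfNeZero ℝ _ lam hlam0.ne'), 0, 0, ?_, ?_⟩
    · rw [h0, h0, himg2]; exact hKT
    · rw [h0, h0, himg2, Real.exp_log hlam0]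
      exact Set.smul_set_mono hTK
end

section
/- Let K ∈ 𝒦ⁿₒ, let φ ∈ 𝒞, and define F(λ) = ∫_{S^{n-1}} φ((x·w)/(λ h_K(w))) h_K(w) dS_K(w) for fixed x ∈ ℝⁿ, x ≠ 0, where S_K is the surface area measure. Then the set {λ > 0 : F(λ) ≤ n V(K)} is a closed half-line [λ₀, ∞) for some λ₀ > 0, i.e., the minimum defining the Orlicz projection body support function h_{Π_φ K}(x) is attained at a unique λ. -/
open RealInnerProductSpace MeasureTheory

section Aux

variable {N : ℕ}

local notation "E" => EuclideanSpace ℝ (Fin (N+1))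

lemma aux_nhds {K : Set E} {r : ℝ} (hr : 0 < r)
    (hrK : Metric.closedBall 0 r ⊆ K) : K ∈ nhds (0:E) :=
  Filter.mem_of_superset (Metric.ball_mem_nhds 0 hr)
    (Metric.ball_subset_closedBall.trans hrK)

lemma aux_gauge_le {K : Set E} {r : ℝ} (hr : 0 < r)
    (hrK : Metric.closedBall 0 r ⊆ K) (z : E) : gauge K z ≤ ‖z‖ / r := by
  have h1 : gauge K z ≤ gauge (Metric.ball (0:E) r) z :=
    gauge_mono (absorbent_ball_zero hr) (Metric.ball_subset_closedBall.trans hrK) z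
  rwa [gauge_ball hr.le] at h1

lemma aux_gauge_ge {K : Set E} {r R : ℝ} (hr : 0 < r) (hR : 0 < R)
    (hrK : Metric.closedBall 0 r ⊆ K)
    (hKR : K ⊆ Metric.closedBall 0 R) (z : E) : ‖z‖ / R ≤ gauge K z :=
  le_gauge_of_subset_closedBall (absorbent_nhds_zero (aux_nhds hr hrK)) hR.le hKR

lemma aux_coord (w : E) (i : Fin (N+1)) : |w i| ≤ ‖w‖ := by
  rw [EuclideanSpace.norm_eq, ← Real.sqrt_sq_eq_abs]
  apply Real.sqrt_le_sqrt
  simpa using Finset.single_le_sum (f := fun j => ‖w j‖ ^ 2)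
    (fun j _ => sq_nonneg _) (Finset.mem_univ i)

lemma aux_radial_lip {K : Set E} {r : ℝ} (hr : 0 < r) (hrK : Metric.closedBall 0 r ⊆ K)
    (hKconv : Convex ℝ K) {S : Set E} {eps C : ℝ} (heps : 0 < eps) (hC : 0 ≤ C)
    (hgS : ∀ w ∈ S, eps ≤ gauge K w) (hCS : ∀ w ∈ S, ‖w‖ ≤ C) :
    LipschitzOnWith (Real.toNNReal (eps⁻¹ + eps⁻¹^2 * r⁻¹ * C))
      (fun w => (gauge K w)⁻¹ • w) S := by
  have hglip : LipschitzWith (Real.toNNReal r)⁻¹ (gauge K) := by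
    refine hKconv.lipschitzWith_gauge (by simpa using hr) ?_
    exact (Metric.ball_subset_closedBall.trans (by simpa [Real.coe_toNNReal r hr.le] using hrK))
  rw [lipschitzOnWith_iff_dist_le_mul]
  intro w hw w' hw'
  have ha := hgS w hw
  have hb := hgS w' hw'
  have ha0 : 0 < gauge K w := lt_of_lt_of_le heps ha
  have hb0 : 0 < gauge K w' := lt_of_lt_of_le heps hb
  have hdg : dist (gauge K w) (gauge K w') ≤ r⁻¹ * dist w w' := by
    have h := hglip.dist_le_mul w w'
    rwa [NNReal.coe_inv, Real.coe_toNNReal r hr.le] at h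
  have key : (gauge K w)⁻¹ • w - (gauge K w')⁻¹ • w' =
      (gauge K w)⁻¹ • (w - w') + ((gauge K w)⁻¹ - (gauge K w')⁻¹) • w' := by
    rw [smul_sub, sub_smul]; abel
  rw [dist_eq_norm]
  rw [key]
  have h1 : ‖(gauge K w)⁻¹ • (w - w')‖ ≤ eps⁻¹ * dist w w' := by
    rw [norm_smul, Real.norm_eq_abs, abs_of_nonneg (inv_nonneg.2 ha0.le), dist_eq_norm]
    gcongr
  have h2 : ‖((gauge K w)⁻¹ - (gauge K w')⁻¹) • w'‖ ≤ (eps⁻¹^2 * r⁻¹ * C) * dist w w' := by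
    rw [norm_smul, Real.norm_eq_abs]
    have hinv : |(gauge K w)⁻¹ - (gauge K w')⁻¹| ≤ eps⁻¹^2 * (r⁻¹ * dist w w') := by
      rw [inv_sub_inv ha0.ne' hb0.ne', abs_div]
      rw [div_le_iff₀ (by positivity)]
      have h3 : |gauge K w' - gauge K w| ≤ r⁻¹ * dist w w' := by
        rw [abs_sub_comm, ← Real.dist_eq]; exact hdg
      calc |gauge K w' - gauge K w| ≤ r⁻¹ * dist w w' := h3
        _ = eps⁻¹^2 * (r⁻¹ * dist w w') * (eps * eps) := by
            field_simp
        _ ≤ eps⁻¹^2 * (r⁻¹ * dist w w') * |gauge K w * gauge K w'| := by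
            have h5 : eps * eps ≤ |gauge K w * gauge K w'| := by
              rw [abs_of_nonneg (by positivity)]
              exact mul_le_mul ha hb heps.le ha0.le
            exact mul_le_mul_of_nonneg_left h5 (by positivity)
    calc |(gauge K w)⁻¹ - (gauge K w')⁻¹| * ‖w'‖
        ≤ (eps⁻¹^2 * (r⁻¹ * dist w w')) * C :=
          mul_le_mul hinv (hCS w' hw') (norm_nonneg _) (by positivity)
      _ = (eps⁻¹^2 * r⁻¹ * C) * dist w w' := by ring
  calc ‖(gauge K w)⁻¹ • (w - w') + ((gauge K w)⁻¹ - (gauge K w')⁻¹) • w'‖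
      ≤ ‖(gauge K w)⁻¹ • (w - w')‖ + ‖((gauge K w)⁻¹ - (gauge K w')⁻¹) • w'‖ := norm_add_le _ _
    _ ≤ eps⁻¹ * dist w w' + (eps⁻¹^2 * r⁻¹ * C) * dist w w' := add_le_add h1 h2
    _ = (eps⁻¹ + eps⁻¹^2 * r⁻¹ * C) * dist w w' := by ring
    _ ≤ ↑(Real.toNNReal (eps⁻¹ + eps⁻¹^2 * r⁻¹ * C)) * dist w w' := by
        rw [Real.coe_toNNReal _ (by positivity)]

lemma aux_face (i : Fin (N+1)) (s : ℝ) :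
    μH[(N : ℝ)] {w : E | w i = s ∧ ∀ j, |w j| ≤ 1} ≠ ⊤ := by
  set A : (Fin N → ℝ) → E := fun y => (EuclideanSpace.equiv (Fin (N+1)) ℝ).symm (i.insertNth s y)
    with hA
  have hlip : LipschitzOnWith (Real.toNNReal (Real.sqrt N)) A (Metric.closedBall 0 1) := by
    rw [lipschitzOnWith_iff_dist_le_mul]
    intro y _ y' _
    rw [dist_eq_norm, EuclideanSpace.norm_eq]
    have hcoord : ∀ j, (A y - A y') j =
        i.insertNth (α := fun _ => ℝ) s y j - i.insertNth (α := fun _ => ℝ) s y' j :=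
      fun j => rfl
    calc √(∑ j, ‖(A y - A y') j‖ ^ 2)
        ≤ √((N : ℝ) * dist y y' ^ 2) := by
          apply Real.sqrt_le_sqrt
          rw [Fin.sum_univ_succAbove (fun j => ‖(A y - A y') j‖ ^ 2) i]
          have hsame : ‖(A y - A y') i‖ ^ 2 = 0 := by
            rw [hcoord i, Fin.insertNth_apply_same, Fin.insertNth_apply_same]
            simp
          rw [hsame, zero_add]
          have hle : ∀ k : Fin N, ‖(A y - A y') (i.succAbove k)‖ ^ 2 ≤ dist y y' ^ 2 := by
            intro k
            rw [hcoord, Fin.insertNth_apply_succAbove, Fin.insertNth_apply_succAbove]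
            have hd : ‖y k - y' k‖ ≤ dist y y' := by
              rw [← dist_eq_norm]; exact dist_le_pi_dist y y' k
            exact pow_le_pow_left₀ (norm_nonneg _) hd 2
          calc ∑ k : Fin N, ‖(A y - A y') (i.succAbove k)‖ ^ 2
              ≤ ∑ _k : Fin N, dist y y' ^ 2 := Finset.sum_le_sum (fun k _ => hle k)
            _ = (N : ℝ) * dist y y' ^ 2 := by simp [mul_comm]
      _ = Real.sqrt N * dist y y' := by
          rw [Real.sqrt_mul (Nat.cast_nonneg N), Real.sqrt_sq dist_nonneg]
      _ ≤ ↑(Real.toNNReal (Real.sqrt N)) * dist y y' := by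
          rw [Real.coe_toNNReal _ (Real.sqrt_nonneg _)]
  have hsub : {w : E | w i = s ∧ ∀ j, |w j| ≤ 1} ⊆ A '' (Metric.closedBall 0 1) := by
    rintro w ⟨hwi, hwj⟩
    refine ⟨i.removeNth w, ?_, ?_⟩
    · rw [Metric.mem_closedBall, dist_zero_right]
      rw [pi_norm_le_iff_of_nonneg zero_le_one]
      intro k
      exact hwj (i.succAbove k)
    · show (EuclideanSpace.equiv (Fin (N+1)) ℝ).symm (i.insertNth s (i.removeNth w)) = w
      have hw2 : i.insertNth s (i.removeNth (fun j => w j)) = (fun j => w j) := by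
        rw [← hwi]
        exact Fin.insertNth_self_removeNth (α := fun _ => ℝ) i (fun j => w j)
      show (EuclideanSpace.equiv (Fin (N+1)) ℝ).symm (i.insertNth s (i.removeNth (fun j => w j))) = w
      rw [hw2]
      rfl
  refine ne_top_of_le_ne_top ?_ ((measure_mono hsub).trans (hlip.hausdorffMeasure_image_le
    (Nat.cast_nonneg N)))
  apply ENNReal.mul_ne_top
  · exact ENNReal.rpow_ne_top_of_nonneg (Nat.cast_nonneg N) ENNReal.coe_ne_top
  · have hvol : μH[(N : ℝ)] (Metric.closedBall (0 : Fin N → ℝ) 1) =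
        volume (Metric.closedBall (0 : Fin N → ℝ) 1) := by
      have h := hausdorffMeasure_pi_real (ι := Fin N)
      simp only [Fintype.card_fin] at h
      rw [h]
    rw [hvol]
    exact ((isCompact_closedBall _ _).measure_lt_top).ne

lemma aux_fin (K : Set E)
    (hKconv : Convex ℝ K) (h0 : (0:E) ∈ interior K)
    {r R : ℝ} (hr : 0 < r) (hR : 0 < R)
    (hrK : Metric.closedBall 0 r ⊆ K) (hKR : K ⊆ Metric.closedBall 0 R) :
    μH[(N : ℝ)] (frontier K) ≠ ⊤ := by
  have hK0 : K ∈ nhds (0:E) := aux_nhds hr hrK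
  set U : Set E := ⋃ i : Fin (N+1),
    ({w : E | w i = 1 ∧ ∀ j, |w j| ≤ 1} ∪ {w : E | w i = -1 ∧ ∀ j, |w j| ≤ 1}) with hU
  have hUnorm : ∀ w ∈ U, 1 ≤ ‖w‖ ∧ ‖w‖ ≤ Real.sqrt (N+1) := by
    intro w hw
    obtain ⟨i, hwmem⟩ := Set.mem_iUnion.mp hw
    have h1 : |w i| = 1 := by rcases hwmem with ⟨h,-⟩|⟨h,-⟩ <;> simp [h]
    have hj : ∀ j, |w j| ≤ 1 := by rcases hwmem with ⟨-,h⟩|⟨-,h⟩ <;> exact h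
    constructor
    · calc (1:ℝ) = |w i| := h1.symm
        _ ≤ ‖w‖ := aux_coord w i
    · rw [EuclideanSpace.norm_eq]
      have hsum : ∑ j, ‖w j‖^2 ≤ ((N:ℝ)+1) := by
        calc ∑ j, ‖w j‖^2 ≤ ∑ _j : Fin (N+1), (1:ℝ) := Finset.sum_le_sum (fun j _ => by
              rw [Real.norm_eq_abs]; nlinarith [hj j, abs_nonneg (w j)])
          _ = ((N:ℝ)+1) := by simp
      calc √(∑ j, ‖w j‖^2) ≤ √((N:ℝ)+1) := Real.sqrt_le_sqrt hsum
        _ = Real.sqrt (N+1) := by norm_num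
  have hgauge_lb : ∀ w ∈ U, R⁻¹ ≤ gauge K w := fun w hw => by
    calc R⁻¹ = 1/R := (one_div R).symm
      _ ≤ ‖w‖/R := by gcongr; exact (hUnorm w hw).1
      _ ≤ gauge K w := aux_gauge_ge hr hR hrK hKR w
  have hlip := aux_radial_lip hr hrK hKconv (S := U) (eps := R⁻¹) (C := Real.sqrt (N+1))
      (by positivity) (Real.sqrt_nonneg _) hgauge_lb (fun w hw => (hUnorm w hw).2)
  have hsub : frontier K ⊆ (fun w => (gauge K w)⁻¹ • w) '' U := by
    intro z hz
    have hgz : gauge K z = 1 := (gauge_eq_one_iff_mem_frontier hKconv hK0).mpr hz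
    have hz0 : z ≠ 0 := by intro h; rw [h, gauge_zero] at hgz; norm_num at hgz
    obtain ⟨i, -, hi⟩ := Finset.exists_max_image Finset.univ (fun j => |z j|)
      ⟨0, Finset.mem_univ 0⟩
    set c := |z i| with hc
    have hc0 : 0 < c := by
      rcases (abs_nonneg (z i)).lt_or_eq with h|h
      · exact h
      · exfalso; apply hz0
        have hz' : ∀ j, z j = 0 := by
          intro j
          have h2 := hi j (Finset.mem_univ j)
          have h3 : |z j| ≤ 0 := by rw [hc] at h2; linarith
          exact abs_eq_zero.mp (le_antisymm h3 (abs_nonneg _))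
        ext j; exact hz' j
    have hcinv : 0 < c⁻¹ := inv_pos.2 hc0
    have hcoords : ∀ j, |(c⁻¹ • z) j| ≤ 1 := by
      intro j
      have hcz : (c⁻¹ • z) j = c⁻¹ * z j := rfl
      rw [hcz, abs_mul, abs_of_nonneg hcinv.le]
      exact inv_mul_le_one_of_le₀ (hi j (Finset.mem_univ j)) (abs_nonneg _)
    refine ⟨c⁻¹ • z, ?_, ?_⟩
    · apply Set.mem_iUnion.mpr
      refine ⟨i, ?_⟩
      have hczi : (c⁻¹ • z) i = c⁻¹ * z i := rfl
      have hzi0 : z i ≠ 0 := abs_pos.mp (hc ▸ hc0)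
      rcases abs_cases (z i) with ⟨h1,-⟩|⟨h1,-⟩
      · left
        refine ⟨?_, hcoords⟩
        rw [hczi, hc, h1]
        exact inv_mul_cancel₀ hzi0
      · right
        refine ⟨?_, hcoords⟩
        rw [hczi]
        have h4 : z i = -c := by rw [hc, h1]; ring
        rw [h4, hc]
        field_simp
    · have hgc : gauge K (c⁻¹ • z) = c⁻¹ := by
        rw [gauge_smul_of_nonneg hcinv.le, hgz]
        simp
      show (gauge K (c⁻¹ • z))⁻¹ • (c⁻¹ • z) = z
      rw [hgc, inv_inv, smul_smul, mul_inv_cancel₀ hc0.ne', one_smul]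
  refine ne_top_of_le_ne_top ?_
    ((measure_mono hsub).trans (hlip.hausdorffMeasure_image_le (Nat.cast_nonneg N)))
  apply ENNReal.mul_ne_top (ENNReal.rpow_ne_top_of_nonneg (Nat.cast_nonneg N) ENNReal.coe_ne_top)
  have hle : μH[(N:ℝ)] U ≤ ∑' i : Fin (N+1),
      (μH[(N:ℝ)] {w : E | w i = 1 ∧ ∀ j, |w j| ≤ 1} +
       μH[(N:ℝ)] {w : E | w i = -1 ∧ ∀ j, |w j| ≤ 1}) :=
    le_trans (measure_iUnion_le _) (ENNReal.tsum_le_tsum fun i => measure_union_le _ _)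
  refine ne_top_of_le_ne_top ?_ hle
  rw [tsum_fintype]
  refine (ENNReal.sum_lt_top.mpr fun i _ => ?_).ne
  exact ENNReal.add_lt_top.mpr ⟨(aux_face i 1).lt_top, (aux_face i (-1)).lt_top⟩


set_option maxHeartbeats 1000000 in
lemma aux_pos (K : Set E)
    (hKconv : Convex ℝ K) (h0 : (0:E) ∈ interior K)
    {r R : ℝ} (hr : 0 < r) (hR : 0 < R)
    (hrK : Metric.closedBall 0 r ⊆ K) (hKR : K ⊆ Metric.closedBall 0 R)
    (ν : E → E)
    (hν : ∀ z ∈ frontier K, ‖ν z‖ = 1 ∧ ∀ y ∈ K, ⟪y, ν z⟫ ≤ ⟪z, ν z⟫)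
    (u : E) (hu : ‖u‖ = 1) :
    0 < μH[(N : ℝ)] {z | z ∈ frontier K ∧ r/(2*R) ≤ ⟪u, ν z⟫} := by
  have hK0 : K ∈ nhds (0:E) := aux_nhds hr hrK
  have hu0 : u ≠ 0 := fun h => by rw [h, norm_zero] at hu; norm_num at hu
  have hrR : r ≤ R := by
    have hmem : r • u ∈ Metric.closedBall (0:E) R := hKR (hrK (by
      simp [Metric.mem_closedBall, dist_zero_right, norm_smul, hu, abs_of_nonneg hr.le]))
    simpa [Metric.mem_closedBall, dist_zero_right, norm_smul, hu, abs_of_nonneg hr.le] using hmem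
  have hfr_cb : ∀ z ∈ frontier K, ‖z‖ ≤ R := by
    intro z hz
    have h1 : z ∈ closure K := hz.1
    have h2 : closure K ⊆ Metric.closedBall (0:E) R :=
      closure_minimal hKR Metric.isClosed_closedBall
    simpa [Metric.mem_closedBall, dist_zero_right] using h2 h1
  have hfr_norm : ∀ z ∈ frontier K, r ≤ ‖z‖ := by
    intro z hz
    have hgz : gauge K z = 1 := (gauge_eq_one_iff_mem_frontier hKconv hK0).mpr hz
    have h3 := aux_gauge_le hr hrK z
    rw [hgz, le_div_iff₀ hr] at h3
    linarith
  have hfr_inner : ∀ z ∈ frontier K, r ≤ ⟪z, ν z⟫ := by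
    intro z hz
    have hmem : r • ν z ∈ K := hrK (by
      simp [Metric.mem_closedBall, dist_zero_right, norm_smul, (hν z hz).1,
        abs_of_nonneg hr.le])
    have h4 := (hν z hz).2 (r • ν z) hmem
    rwa [real_inner_smul_left, real_inner_self_eq_norm_sq, (hν z hz).1, one_pow, mul_one] at h4
  set A : Set E := {z | z ∈ frontier K ∧ ‖‖z‖⁻¹ • z - u‖ ≤ r/(2*R)} with hA
  have hA_sub : A ⊆ {z | z ∈ frontier K ∧ r/(2*R) ≤ ⟪u, ν z⟫} := by
    rintro z ⟨hz, hcap⟩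
    refine ⟨hz, ?_⟩
    have hz0 : 0 < ‖z‖ := lt_of_lt_of_le hr (hfr_norm z hz)
    have h1 : ⟪u, ν z⟫ = ⟪‖z‖⁻¹ • z, ν z⟫ - ⟪‖z‖⁻¹ • z - u, ν z⟫ := by
      rw [inner_sub_left]; ring
    have h2 : (r:ℝ)/R ≤ ⟪‖z‖⁻¹ • z, ν z⟫ := by
      rw [real_inner_smul_left, div_le_iff₀ hR]
      calc r ≤ ⟪z, ν z⟫ := hfr_inner z hz
        _ = ‖z‖⁻¹ * ⟪z, ν z⟫ * ‖z‖ := by field_simp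
        _ ≤ ‖z‖⁻¹ * ⟪z, ν z⟫ * R := by
            have hnn : 0 ≤ ‖z‖⁻¹ * ⟪z, ν z⟫ := mul_nonneg (inv_nonneg.2 hz0.le)
              (le_trans hr.le (hfr_inner z hz))
            exact mul_le_mul_of_nonneg_left (hfr_cb z hz) hnn
    have h3 : |⟪‖z‖⁻¹ • z - u, ν z⟫| ≤ r/(2*R) := by
      calc |⟪‖z‖⁻¹ • z - u, ν z⟫| ≤ ‖‖z‖⁻¹ • z - u‖ * ‖ν z‖ := abs_real_inner_le_norm _ _
        _ = ‖‖z‖⁻¹ • z - u‖ := by rw [(hν z hz).1, mul_one]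
        _ ≤ r/(2*R) := hcap
    have h5 : r/R - r/(2*R) = r/(2*R) := by field_simp; ring
    have h6 := (abs_le.mp h3).2
    calc r/(2*R) = r/R - r/(2*R) := h5.symm
      _ ≤ ⟪‖z‖⁻¹ • z, ν z⟫ - ⟪‖z‖⁻¹ • z - u, ν z⟫ := by linarith
      _ = ⟪u, ν z⟫ := h1.symm
  refine lt_of_lt_of_le ?_ (measure_mono hA_sub)
  -- orthonormal family orthogonal to u
  haveI : Fact (Module.finrank ℝ E = N + 1) := ⟨finrank_euclideanSpace_fin⟩
  have hfrk : Module.finrank ℝ ((ℝ ∙ u)ᗮ) = N := Submodule.finrank_orthogonal_span_singleton hu0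
  set ob := stdOrthonormalBasis ℝ ((ℝ ∙ u)ᗮ) with hob
  set b : Fin N → E := fun k => (ob (Fin.cast hfrk.symm k) : E) with hb
  have hbu : ∀ k, ⟪u, b k⟫ = 0 :=
    fun k => (Submodule.mem_orthogonal _ _).mp (ob (Fin.cast hfrk.symm k)).2 u
      (Submodule.mem_span_singleton_self u)
  have hbb : ∀ k l, ⟪b k, b l⟫ = if k = l then 1 else 0 := by
    intro k l
    have horth := ob.orthonormal
    rw [orthonormal_iff_ite] at horth
    have h1 := horth (Fin.cast hfrk.symm k) (Fin.cast hfrk.symm l)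
    rw [Submodule.coe_inner] at h1
    rw [hb]
    simp only []
    rw [h1]
    congr 1
    simp [Fin.ext_iff]
  have hbnorm : ∀ k, ‖b k‖ = 1 := by
    intro k
    have h1 := hbb k k
    rw [if_pos rfl, real_inner_self_eq_norm_sq] at h1
    nlinarith [norm_nonneg (b k)]
  -- inner product with u is bounded below on A
  have hAq : ∀ z ∈ A, r/2 ≤ ⟪u, z⟫ := by
    rintro z ⟨hz, hcap⟩
    have hz0 : 0 < ‖z‖ := lt_of_lt_of_le hr (hfr_norm z hz)
    have h1 : ⟪u, z⟫ = ⟪‖z‖⁻¹ • z, z⟫ - ⟪‖z‖⁻¹ • z - u, z⟫ := by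
      rw [inner_sub_left]; ring
    have h2 : ⟪‖z‖⁻¹ • z, z⟫ = ‖z‖ := by
      rw [real_inner_smul_left, real_inner_self_eq_norm_sq]
      field_simp
    have h3 : |⟪‖z‖⁻¹ • z - u, z⟫| ≤ r/2 := by
      calc |⟪‖z‖⁻¹ • z - u, z⟫| ≤ ‖‖z‖⁻¹ • z - u‖ * ‖z‖ := abs_real_inner_le_norm _ _
        _ ≤ (r/(2*R)) * R := by
            apply mul_le_mul hcap (hfr_cb z hz) hz0.le
            positivity
        _ = r/2 := by field_simp
    have h4 := (abs_le.mp h3).2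
    have h5 := hfr_norm z hz
    rw [h1, h2]
    linarith
  set L : E → (Fin N → ℝ) := fun z k => ⟪b k, z⟫ / ⟪u, z⟫ with hL
  have hq_pos : ∀ z ∈ A, (0:ℝ) < ⟪u, z⟫ := fun z hz => lt_of_lt_of_le (by positivity) (hAq z hz)
  have hp_bdd : ∀ z ∈ A, ∀ k, |⟪b k, z⟫| ≤ R := by
    intro z hz k
    calc |⟪b k, z⟫| ≤ ‖b k‖ * ‖z‖ := abs_real_inner_le_norm _ _
      _ = ‖z‖ := by rw [hbnorm, one_mul]
      _ ≤ R := hfr_cb z hz.1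
  have hq_bdd : ∀ z ∈ A, |⟪u, z⟫| ≤ R := by
    intro z hz
    calc |⟪u, z⟫| ≤ ‖u‖ * ‖z‖ := abs_real_inner_le_norm _ _
      _ = ‖z‖ := by rw [hu, one_mul]
      _ ≤ R := hfr_cb z hz.1
  set cL : ℝ := 8*R/r^2 with hcL
  have hcLpos : 0 < cL := by positivity
  have hLlip : LipschitzOnWith (Real.toNNReal cL) L A := by
    rw [lipschitzOnWith_iff_dist_le_mul]
    intro z hz z' hz'
    rw [Real.coe_toNNReal _ hcLpos.le]
    rw [dist_pi_le_iff (by positivity)]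
    intro k
    have hq := hq_pos z hz
    have hq' := hq_pos z' hz'
    rw [Real.dist_eq]
    have hdiff : L z k - L z' k =
        (⟪b k, z⟫ * ⟪u, z'⟫ - ⟪u, z⟫ * ⟪b k, z'⟫) / (⟪u, z⟫ * ⟪u, z'⟫) := by
      rw [hL]
      simp only []
      rw [div_sub_div _ _ hq.ne' hq'.ne']
    have hnum : |⟪b k, z⟫ * ⟪u, z'⟫ - ⟪u, z⟫ * ⟪b k, z'⟫| ≤ 2*R*dist z z' := by
      have hsplit : ⟪b k, z⟫ * ⟪u, z'⟫ - ⟪u, z⟫ * ⟪b k, z'⟫ =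
          ⟪b k, z⟫ * (⟪u, z'⟫ - ⟪u, z⟫) + (⟪b k, z⟫ - ⟪b k, z'⟫) * ⟪u, z⟫ := by ring
      have hbz : |⟪b k, z⟫ - ⟪b k, z'⟫| ≤ dist z z' := by
        rw [← inner_sub_right, dist_eq_norm]
        calc |⟪b k, z - z'⟫| ≤ ‖b k‖ * ‖z - z'‖ := abs_real_inner_le_norm _ _
          _ = ‖z - z'‖ := by rw [hbnorm, one_mul]
      have huz : |⟪u, z'⟫ - ⟪u, z⟫| ≤ dist z z' := by
        rw [← inner_sub_right, dist_eq_norm]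
        calc |⟪u, z' - z⟫| ≤ ‖u‖ * ‖z' - z‖ := abs_real_inner_le_norm _ _
          _ = ‖z - z'‖ := by rw [hu, one_mul, norm_sub_rev]
      calc |⟪b k, z⟫ * ⟪u, z'⟫ - ⟪u, z⟫ * ⟪b k, z'⟫|
          ≤ |⟪b k, z⟫| * |⟪u, z'⟫ - ⟪u, z⟫| + |⟪b k, z⟫ - ⟪b k, z'⟫| * |⟪u, z⟫| := by
            rw [hsplit]
            calc |⟪b k, z⟫ * (⟪u, z'⟫ - ⟪u, z⟫) + (⟪b k, z⟫ - ⟪b k, z'⟫) * ⟪u, z⟫|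
                ≤ |⟪b k, z⟫ * (⟪u, z'⟫ - ⟪u, z⟫)| + |(⟪b k, z⟫ - ⟪b k, z'⟫) * ⟪u, z⟫| :=
                  abs_add_le _ _
              _ = |⟪b k, z⟫| * |⟪u, z'⟫ - ⟪u, z⟫| + |⟪b k, z⟫ - ⟪b k, z'⟫| * |⟪u, z⟫| := by
                  rw [abs_mul, abs_mul]
        _ ≤ R * dist z z' + dist z z' * R := by
            apply add_le_add
            · exact mul_le_mul (hp_bdd z hz k) huz (abs_nonneg _) hR.le
            · exact mul_le_mul hbz (hq_bdd z hz) (abs_nonneg _) dist_nonneg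
        _ = 2*R*dist z z' := by ring
    have hden : (r/2)*(r/2) ≤ ⟪u, z⟫ * ⟪u, z'⟫ :=
      mul_le_mul (hAq z hz) (hAq z' hz') (by positivity) (le_trans (by positivity) (hAq z hz))
    rw [hdiff, abs_div]
    rw [abs_of_pos (mul_pos hq hq')]
    rw [div_le_iff₀ (mul_pos hq hq')]
    calc |⟪b k, z⟫ * ⟪u, z'⟫ - ⟪u, z⟫ * ⟪b k, z'⟫| ≤ 2*R*dist z z' := hnum
      _ = (8*R/r^2) * dist z z' * ((r/2)*(r/2)) := by field_simp; ring
      _ ≤ (8*R/r^2) * dist z z' * (⟪u, z⟫ * ⟪u, z'⟫) := by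
          apply mul_le_mul_of_nonneg_left hden (by positivity)
      _ = cL * dist z z' * (⟪u, z⟫ * ⟪u, z'⟫) := by rw [hcL]
  -- the closed ball of radius s₀ is contained in L '' A
  set s₀ : ℝ := r/(8*R*(N+1)) with hs₀
  have hs₀pos : 0 < s₀ := by positivity
  have himg : Metric.closedBall (0 : Fin N → ℝ) s₀ ⊆ L '' A := by
    intro y hy
    have hy' : ∀ k, |y k| ≤ s₀ := by
      rw [Metric.mem_closedBall, dist_zero_right] at hy
      intro k
      calc |y k| = ‖y k‖ := rfl
        _ ≤ ‖y‖ := norm_le_pi_norm y k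
        _ ≤ s₀ := hy
    set v : E := ∑ k, y k • b k with hv
    have hvnorm : ‖v‖ ≤ r/(8*R) := by
      have h1 : ‖v‖ ≤ (N:ℝ) * s₀ := by
        calc ‖v‖ ≤ ∑ k, ‖y k • b k‖ := norm_sum_le _ _
          _ = ∑ k, |y k| := by simp [norm_smul, hbnorm]
          _ ≤ ∑ _k : Fin N, s₀ := Finset.sum_le_sum (fun k _ => hy' k)
          _ = (N:ℝ) * s₀ := by simp [mul_comm]
      have h2 : (N:ℝ) * s₀ ≤ r/(8*R) := by
        rw [hs₀, mul_div_assoc']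
        rw [div_le_div_iff₀ (by positivity) (by positivity)]
        nlinarith [hr.le, hR.le, Nat.cast_nonneg (α := ℝ) N]
      linarith
    have hupv : ⟪u, v⟫ = 0 := by
      rw [hv, inner_sum]
      exact Finset.sum_eq_zero (fun k _ => by rw [real_inner_smul_right, hbu, mul_zero])
    have hbv : ∀ k, ⟪b k, v⟫ = y k := by
      intro k
      rw [hv, inner_sum, Finset.sum_eq_single k]
      · rw [real_inner_smul_right, hbb, if_pos rfl, mul_one]
      · intro l _ hlk
        rw [real_inner_smul_right, hbb, if_neg (fun h => hlk h.symm), mul_zero]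
      · intro h
        exact absurd (Finset.mem_univ k) h
    set p : E := u + v with hp
    have hpu : ⟪u, p⟫ = 1 := by
      rw [hp, inner_add_right, hupv, real_inner_self_eq_norm_sq, hu]
      norm_num
    have hbp : ∀ k, ⟪b k, p⟫ = y k := by
      intro k
      rw [hp, inner_add_right, hbv, real_inner_comm, hbu, zero_add]
    have hpdiff : |‖p‖ - 1| ≤ ‖v‖ := by
      have h1 := abs_norm_sub_norm_le p u
      rw [hp] at h1
      simpa [norm_sub_rev, hu] using (by simpa [hu] using h1 : |‖u + v‖ - 1| ≤ ‖u + v - u‖)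
    have hr8R : r/(8*R) ≤ 1/8 := by
      rw [div_le_div_iff₀ (by positivity) (by norm_num)]
      nlinarith
    have hpnorm : 1/2 ≤ ‖p‖ := by
      have := (abs_le.mp hpdiff).1
      linarith
    have hp0 : p ≠ 0 := by
      intro h
      rw [h, norm_zero] at hpnorm
      linarith
    have hgp : 0 < gauge K p :=
      lt_of_lt_of_le (div_pos (lt_of_lt_of_le one_half_pos hpnorm) hR)
        (aux_gauge_ge hr hR hrK hKR p)
    set t : ℝ := (gauge K p)⁻¹ with ht
    have ht0 : 0 < t := inv_pos.2 hgp
    set z := t • p with hzdef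
    have hzfr : z ∈ frontier K := by
      apply (gauge_eq_one_iff_mem_frontier hKconv hK0).mp
      rw [hzdef, gauge_smul_of_nonneg ht0.le, smul_eq_mul, ht, inv_mul_cancel₀ hgp.ne']
    have hznorm : ‖z‖ = t * ‖p‖ := by
      rw [hzdef, norm_smul, Real.norm_eq_abs, abs_of_pos ht0]
    have hpn0 : (0:ℝ) < ‖p‖ := lt_of_lt_of_le one_half_pos hpnorm
    have hθ : ‖z‖⁻¹ • z = ‖p‖⁻¹ • p := by
      rw [hzdef, hznorm, smul_smul]
      congr 1
      field_simp
    have hcap2 : ‖‖p‖⁻¹ • p - u‖ ≤ r/(2*R) := by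
      have hsplit : ‖p‖⁻¹ • p - u = (‖p‖⁻¹ • p - p) + (p - u) := by abel
      have hpv : p - u = v := by rw [hp]; abel
      have h1 : ‖‖p‖⁻¹ • p - p‖ = |1 - ‖p‖| := by
        have h2 : ‖p‖⁻¹ • p - p = (‖p‖⁻¹ - 1) • p := by rw [sub_smul, one_smul]
        rw [h2, norm_smul, Real.norm_eq_abs]
        have h3 : ‖p‖⁻¹ - 1 = (1 - ‖p‖) / ‖p‖ := by field_simp
        rw [h3, abs_div, abs_of_pos hpn0, div_mul_cancel₀ _ hpn0.ne']
      have h4 : |1 - ‖p‖| ≤ ‖v‖ := by rw [abs_sub_comm]; exact hpdiff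
      calc ‖‖p‖⁻¹ • p - u‖ ≤ ‖‖p‖⁻¹ • p - p‖ + ‖p - u‖ := by rw [hsplit]; exact norm_add_le _ _
        _ = |1 - ‖p‖| + ‖v‖ := by rw [h1, hpv]
        _ ≤ ‖v‖ + ‖v‖ := by linarith
        _ ≤ r/(8*R) + r/(8*R) := by linarith
        _ ≤ r/(2*R) := by
            rw [← add_div, div_le_div_iff₀ (by positivity) (by positivity)]
            nlinarith
    have hzA : z ∈ A := ⟨hzfr, by rw [hθ]; exact hcap2⟩
    refine ⟨z, hzA, ?_⟩
    funext k
    rw [hL]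
    simp only []
    rw [hzdef, real_inner_smul_right, real_inner_smul_right, hbp, hpu, mul_one]
    rw [mul_comm, mul_div_assoc, div_self ht0.ne', mul_one]
  have hball : 0 < μH[(N:ℝ)] (Metric.closedBall (0 : Fin N → ℝ) s₀) := by
    have h := hausdorffMeasure_pi_real (ι := Fin N)
    simp only [Fintype.card_fin] at h
    rw [h]
    exact Metric.measure_closedBall_pos volume 0 hs₀pos
  have hchain := (measure_mono himg).trans (hLlip.hausdorffMeasure_image_le (Nat.cast_nonneg N))
  rcases eq_or_ne (μH[(N:ℝ)] A) 0 with h|h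
  · rw [h, mul_zero] at hchain
    exact absurd (lt_of_lt_of_le hball hchain) (lt_irrefl 0)
  · exact pos_iff_ne_zero.mpr h


end Aux

set_option maxHeartbeats 2000000 in
/-- For `φ ∈ 𝒞` and a convex body `K` with `0 ∈ int K`, the set
`{λ > 0 : ∫_{S^{n-1}} φ((x·w)/(λ h_K(w))) h_K(w) dS_K(w) ≤ nV(K)}` is a closed half-line
`[λ₀, ∞)` with `λ₀ > 0`; the surface-area-measure integral is expressed as a boundary
integral via a selection `ν` of exterior unit normals. -/
theorem stmt_12 (n : ℕ) (hn : 2 ≤ n) (K : Set (EuclideanSpace ℝ (Fin n)))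
    (hKcomp : IsCompact K) (hKconv : Convex ℝ K)
    (h0 : (0 : EuclideanSpace ℝ (Fin n)) ∈ interior K)
    (φ : ℝ → ℝ) (hφconv : ConvexOn ℝ Set.univ φ)
    (hφnonneg : ∀ t, 0 ≤ φ t) (hφ0 : φ 0 = 0)
    (hφpos : ∀ t : ℝ, t ≠ 0 → 0 < φ (-t) + φ t)
    (ν : EuclideanSpace ℝ (Fin n) → EuclideanSpace ℝ (Fin n))
    (hνmeas : Measurable ν)
    (hν : ∀ z ∈ frontier K, ‖ν z‖ = 1 ∧ ∀ y ∈ K, ⟪y, ν z⟫ ≤ ⟪z, ν z⟫)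
    (x : EuclideanSpace ℝ (Fin n)) (hx : x ≠ 0) :
    ∃ lam₀ : ℝ, 0 < lam₀ ∧
      {lam : ℝ | 0 < lam ∧
        (∫ z in frontier K,
            φ (⟪x, ν z⟫ / (lam * sSup ((fun y => ⟪y, ν z⟫) '' K))) *
              sSup ((fun y => ⟪y, ν z⟫) '' K) ∂(μH[(n : ℝ) - 1]))
          ≤ n * (volume K).toReal} = Set.Ici lam₀ := by
  obtain ⟨m, rfl⟩ : ∃ m, n = m + 1 := ⟨n - 1, by omega⟩
  -- radii r and R
  obtain ⟨ε, hε, hballε⟩ := Metric.mem_nhds_iff.mp (mem_interior_iff_mem_nhds.mp h0)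
  set r : ℝ := ε/2 with hrdef
  have hr : 0 < r := by positivity
  have hrK : Metric.closedBall 0 r ⊆ K := by
    intro y hy
    rw [Metric.mem_closedBall, dist_zero_right] at hy
    exact hballε (by rw [Metric.mem_ball, dist_zero_right]; linarith)
  obtain ⟨R0, hR0⟩ := hKcomp.isBounded.subset_closedBall 0
  set R : ℝ := max R0 r with hRdef
  have hR : 0 < R := lt_of_lt_of_le hr (le_max_right _ _)
  have hKR : K ⊆ Metric.closedBall 0 R :=
    hR0.trans (Metric.closedBall_subset_closedBall (le_max_left _ _))
  have hKcl : IsClosed K := hKcomp.isClosed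
  have hfrK : frontier K ⊆ K := hKcl.frontier_subset
  have hfrmeas : MeasurableSet (frontier K) := isClosed_frontier.measurableSet
  -- rewrite the Hausdorff dimension exponent
  have hdim : ((m+1 : ℕ) : ℝ) - 1 = (m : ℝ) := by push_cast; ring
  rw [hdim]
  -- support function facts
  set H : EuclideanSpace ℝ (Fin (m+1)) → ℝ := fun z => ⟪z, ν z⟫ with hH
  have hsup_eq : ∀ z ∈ frontier K, sSup ((fun y => ⟪y, ν z⟫) '' K) = H z := by
    intro z hz
    apply IsGreatest.csSup_eq
    exact ⟨⟨z, hfrK hz, rfl⟩, by rintro t ⟨y, hy, rfl⟩; exact (hν z hz).2 y hy⟩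
  have hμfr : μH[(m:ℝ)] (frontier K) ≠ ⊤ := aux_fin K hKconv h0 hr hR hrK hKR
  haveI hfinm : IsFiniteMeasure (μH[(m:ℝ)].restrict (frontier K)) := by
    constructor
    rw [Measure.restrict_apply_univ]
    exact lt_top_iff_ne_top.mpr hμfr
  have hHub : ∀ z ∈ frontier K, H z ≤ R := by
    intro z hz
    calc H z ≤ ‖z‖ * ‖ν z‖ := real_inner_le_norm _ _
      _ = ‖z‖ := by rw [(hν z hz).1, mul_one]
      _ ≤ R := by
          have h2 := hKR (hfrK hz)
          rwa [Metric.mem_closedBall, dist_zero_right] at h2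
  have hHlb : ∀ z ∈ frontier K, r ≤ H z := by
    intro z hz
    have hmem : r • ν z ∈ K := hrK (by
      simp [Metric.mem_closedBall, dist_zero_right, norm_smul, (hν z hz).1,
        abs_of_nonneg hr.le])
    have h4 := (hν z hz).2 (r • ν z) hmem
    rwa [real_inner_smul_left, real_inner_self_eq_norm_sq, (hν z hz).1, one_pow, mul_one] at h4
  have hHpos : ∀ z ∈ frontier K, 0 < H z := fun z hz => lt_of_lt_of_le hr (hHlb z hz)
  -- φ basics
  have hφcont : Continuous φ := by
    rw [← continuousOn_univ]
    exact ConvexOn.continuousOn isOpen_univ hφconv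
  have hkey : ∀ (c s : ℝ), 0 ≤ c → c ≤ 1 → φ (c * s) ≤ c * φ s := by
    intro c s hc0 hc1
    have h := hφconv.2 (Set.mem_univ s) (Set.mem_univ 0) hc0 (by linarith : 0 ≤ 1 - c)
      (by ring)
    simpa [hφ0] using h
  have hmono : ∀ t a b : ℝ, 0 < a → a ≤ b → φ (t / b) ≤ φ (t / a) := by
    intro t a b ha hab
    have hb : 0 < b := lt_of_lt_of_le ha hab
    have he : t / b = (a/b) * (t/a) := by field_simp
    rw [he]
    calc φ ((a/b)*(t/a)) ≤ (a/b) * φ (t/a) :=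
          hkey _ _ (by positivity) ((div_le_one hb).mpr hab)
      _ ≤ 1 * φ (t/a) :=
          mul_le_mul_of_nonneg_right ((div_le_one hb).mpr hab) (hφnonneg _)
      _ = φ (t/a) := one_mul _
  have hsuper : ∀ w s : ℝ, 1 ≤ s → s * φ w ≤ φ (s * w) := by
    intro w s hs
    have hs0 : 0 < s := lt_of_lt_of_le one_pos hs
    have h1 : φ w = φ ((1/s) * (s * w)) := by
      congr 1
      field_simp
    have h2 : φ ((1/s) * (s * w)) ≤ (1/s) * φ (s * w) :=
      hkey _ _ (by positivity) (by rw [div_le_one hs0]; linarith)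
    have h3 : φ w ≤ (1/s) * φ (s*w) := by rw [h1]; exact h2
    calc s * φ w ≤ s * ((1/s) * φ (s*w)) := mul_le_mul_of_nonneg_left h3 hs0.le
      _ = φ (s * w) := by field_simp
  -- definition of G and F
  set G : ℝ → EuclideanSpace ℝ (Fin (m+1)) → ℝ :=
    fun lam z => φ (⟪x, ν z⟫ / (lam * H z)) * H z with hG
  set F : ℝ → ℝ := fun lam => ∫ z in frontier K, G lam z ∂(μH[(m:ℝ)]) with hF
  have hFeq : ∀ lam : ℝ,
      (∫ z in frontier K, φ (⟪x, ν z⟫ / (lam * sSup ((fun y => ⟪y, ν z⟫) '' K))) *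
        sSup ((fun y => ⟪y, ν z⟫) '' K) ∂(μH[(m:ℝ)])) = F lam := by
    intro lam
    apply setIntegral_congr_fun hfrmeas
    intro z hz
    dsimp only
    rw [hsup_eq z hz]
  -- measurability of G lam
  have hinner_x : Measurable (fun z => ⟪x, ν z⟫) :=
    (continuous_const.inner continuous_id).measurable.comp hνmeas
  have hHmeas : Measurable H := by
    have h1 : Measurable (fun z => ((z : EuclideanSpace ℝ (Fin (m+1))), ν z)) :=
      measurable_id.prodMk hνmeas
    exact continuous_inner.measurable.comp h1
  have hGmeas : ∀ lam : ℝ, Measurable (G lam) := by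
    intro lam
    apply Measurable.mul ?_ hHmeas
    exact hφcont.measurable.comp (hinner_x.div ((measurable_const.mul hHmeas)))
  -- integrability of G lam on the frontier
  have hGint : ∀ lam : ℝ, 0 < lam → IntegrableOn (G lam) (frontier K) μH[(m:ℝ)] := by
    intro lam hlam
    set M : ℝ := ‖x‖/(lam*r) with hM
    have hM0 : 0 ≤ M := by positivity
    obtain ⟨w₀, hw₀mem, hw₀⟩ := (isCompact_Icc (a := -M) (b := M)).exists_isMaxOn
      ⟨0, by constructor <;> simp [hM0]⟩ hφcont.continuousOn
    rw [isMaxOn_iff] at hw₀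
    apply Integrable.mono' (integrable_const (φ w₀ * R))
    · exact (hGmeas lam).aestronglyMeasurable
    · rw [ae_restrict_iff' hfrmeas]
      apply Filter.Eventually.of_forall
      intro z hz
      have h1 : r ≤ H z := hHlb z hz
      have hHz : 0 < H z := hHpos z hz
      have hxz : |⟪x, ν z⟫| ≤ ‖x‖ := by
        calc |⟪x, ν z⟫| ≤ ‖x‖ * ‖ν z‖ := abs_real_inner_le_norm _ _
          _ = ‖x‖ := by rw [(hν z hz).1, mul_one]
      have harg : |⟪x, ν z⟫ / (lam * H z)| ≤ M := by
        rw [abs_div, hM]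
        apply div_le_div₀ (norm_nonneg x) hxz (by positivity)
        rw [abs_of_pos (by positivity : (0:ℝ) < lam * H z)]
        exact mul_le_mul_of_nonneg_left h1 hlam.le
      have hargmem : ⟪x, ν z⟫ / (lam * H z) ∈ Set.Icc (-M) M := by
        constructor
        · linarith [(abs_le.mp harg).1]
        · exact (abs_le.mp harg).2
      rw [Real.norm_eq_abs, hG]
      simp only []
      rw [abs_mul, abs_of_nonneg (hφnonneg _), abs_of_pos hHz]
      exact mul_le_mul (hw₀ _ hargmem) (hHub z hz) hHz.le (hφnonneg _)
  -- monotonicity of F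
  have hGptmono : ∀ a b : ℝ, 0 < a → a ≤ b → ∀ z ∈ frontier K, G b z ≤ G a z := by
    intro a b ha hab z hz
    have hHz := hHpos z hz
    apply mul_le_mul_of_nonneg_right ?_ hHz.le
    exact hmono _ (a * H z) (b * H z) (by positivity)
      (mul_le_mul_of_nonneg_right hab hHz.le)
  have hFmono : ∀ a b : ℝ, 0 < a → a ≤ b → F b ≤ F a := by
    intro a b ha hab
    exact setIntegral_mono_on (hGint b (lt_of_lt_of_le ha hab)) (hGint a ha) hfrmeas
      (hGptmono a b ha hab)
  -- positivity of the volume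
  have hV : 0 < (volume K).toReal := by
    apply ENNReal.toReal_pos
    · intro hz0
      have h1 : volume (Metric.closedBall (0 : EuclideanSpace ℝ (Fin (m+1))) r) ≤ volume K :=
        measure_mono hrK
      rw [hz0] at h1
      exact absurd (le_antisymm h1 zero_le)
        (Metric.measure_closedBall_pos volume 0 hr).ne'
    · exact hKcomp.measure_lt_top.ne
  set nV : ℝ := ((m+1 : ℕ) : ℝ) * (volume K).toReal with hnV
  have hnV0 : 0 < nV := by
    apply mul_pos _ hV
    exact_mod_cast Nat.succ_pos m
  set S : Set ℝ := {lam | 0 < lam ∧ F lam ≤ nV} with hS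
  -- the goal set is S
  have hsetEq : {lam : ℝ | 0 < lam ∧
      (∫ z in frontier K, φ (⟪x, ν z⟫ / (lam * sSup ((fun y => ⟪y, ν z⟫) '' K))) *
        sSup ((fun y => ⟪y, ν z⟫) '' K) ∂(μH[(m:ℝ)])) ≤ ((m+1 : ℕ) : ℝ) * (volume K).toReal}
      = S := by
    ext lam
    rw [hS]
    simp only [Set.mem_setOf_eq]
    rw [hFeq lam]
  -- S is nonempty
  have hF1nonneg : 0 ≤ F 1 := by
    apply setIntegral_nonneg hfrmeas
    intro z hz
    exact mul_nonneg (hφnonneg _) (hHpos z hz).le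
  have hFdecay : ∀ lam : ℝ, 1 ≤ lam → F lam ≤ F 1 / lam := by
    intro lam hlam
    have hlam0 : 0 < lam := lt_of_lt_of_le one_pos hlam
    have h1 : ∀ z ∈ frontier K, G lam z ≤ (1/lam) * G 1 z := by
      intro z hz
      have hHz := hHpos z hz
      rw [hG]
      dsimp only
      rw [show (1/lam) * (φ (⟪x, ν z⟫ / (1 * H z)) * H z)
          = ((1/lam) * φ (⟪x, ν z⟫ / (1 * H z))) * H z by ring]
      apply mul_le_mul_of_nonneg_right ?_ hHz.le
      have he : ⟪x, ν z⟫ / (lam * H z) = (1/lam) * (⟪x, ν z⟫ / (1 * H z)) := by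
        field_simp
      rw [he]
      exact hkey _ _ (by positivity) (by rw [div_le_one hlam0]; exact hlam)
    calc F lam ≤ ∫ z in frontier K, (1/lam) * G 1 z ∂(μH[(m:ℝ)]) := by
          apply setIntegral_mono_on (hGint lam hlam0) ?_ hfrmeas h1
          exact (hGint 1 one_pos).const_mul _
      _ = (1/lam) * F 1 := by rw [hF]; exact integral_const_mul _ _
      _ = F 1 / lam := by ring
  have hSne : S.Nonempty := by
    refine ⟨max 1 (F 1 / nV + 1), lt_of_lt_of_le one_pos (le_max_left _ _), ?_⟩
    set lb := max 1 (F 1 / nV + 1) with hlb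
    have hlb1 : 1 ≤ lb := le_max_left _ _
    have hlb0 : 0 < lb := lt_of_lt_of_le one_pos hlb1
    calc F lb ≤ F 1 / lb := hFdecay lb hlb1
      _ ≤ nV := by
          rw [div_le_iff₀ hlb0]
          have h2 : F 1 / nV + 1 ≤ lb := le_max_right _ _
          rw [div_add' _ _ _ hnV0.ne', div_le_iff₀ hnV0] at h2
          nlinarith
  -- sign selection
  obtain ⟨σ, hσ1, hσpos⟩ : ∃ σ : ℝ, (σ = 1 ∨ σ = -1) ∧ 0 < φ σ := by
    rcases lt_or_ge 0 (φ 1) with h|h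
    · exact ⟨1, Or.inl rfl, h⟩
    · refine ⟨-1, Or.inr rfl, ?_⟩
      have h1 := hφpos 1 one_ne_zero
      have h2 : φ 1 = 0 := le_antisymm h (hφnonneg 1)
      rw [h2] at h1
      linarith
  have hσsq : σ * σ = 1 := by rcases hσ1 with h|h <;> rw [h] <;> norm_num
  have hσabs : |σ| = 1 := by rcases hσ1 with h|h <;> rw [h] <;> norm_num
  have hxn : 0 < ‖x‖ := norm_pos_iff.mpr hx
  set u : EuclideanSpace ℝ (Fin (m+1)) := (σ * ‖x‖⁻¹) • x with hu_def
  have hu : ‖u‖ = 1 := by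
    rw [hu_def, norm_smul, Real.norm_eq_abs, abs_mul, hσabs, one_mul,
      abs_of_pos (inv_pos.2 hxn)]
    field_simp
  set δ : ℝ := r/(2*R) with hδdef
  have hδ0 : 0 < δ := by positivity
  have hApos : 0 < μH[(m:ℝ)] {z | z ∈ frontier K ∧ δ ≤ ⟪u, ν z⟫} :=
    aux_pos K hKconv h0 hr hR hrK hKR ν hν u hu
  set A : Set (EuclideanSpace ℝ (Fin (m+1))) := {z | z ∈ frontier K ∧ δ ≤ ⟪u, ν z⟫}
    with hAdef
  have hAsub : A ⊆ frontier K := fun z hz => hz.1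
  have hAmeas : MeasurableSet A := by
    have h1 : A = frontier K ∩ (fun z => ⟪u, ν z⟫) ⁻¹' (Set.Ici δ) := by
      ext z
      exact ⟨fun ⟨a,b⟩ => ⟨a,b⟩, fun ⟨a,b⟩ => ⟨a,b⟩⟩
    rw [h1]
    exact hfrmeas.inter
      (((continuous_const.inner continuous_id).measurable.comp hνmeas) measurableSet_Ici)
  have hAfin : μH[(m:ℝ)] A ≠ ⊤ := ne_top_of_le_ne_top hμfr (measure_mono hAsub)
  have hAtr : 0 < (μH[(m:ℝ)] A).toReal := ENNReal.toReal_pos hApos.ne' hAfin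
  -- lower bound for elements of S
  set lam_min : ℝ := min (δ*‖x‖/R) (δ*‖x‖*(φ σ)*r*(μH[(m:ℝ)] A).toReal/(R*nV)) with hlmdef
  have hlm0 : 0 < lam_min := by
    apply lt_min
    · positivity
    · positivity
  have hSlb : ∀ lam ∈ S, lam_min ≤ lam := by
    rintro lam ⟨hlam, hFle⟩
    by_contra hcon
    push_neg at hcon
    have hM1 : 1 ≤ δ*‖x‖/(lam*R) := by
      rw [le_div_iff₀ (by positivity)]
      have h := lt_of_lt_of_le hcon (min_le_left _ _)
      rw [lt_div_iff₀ hR] at h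
      linarith
    have hpt : ∀ z ∈ A, (δ*‖x‖/(lam*R)) * φ σ * r ≤ G lam z := by
      rintro z ⟨hzfr, hδz⟩
      have hHz := hHpos z hzfr
      have hσx : δ*‖x‖ ≤ σ * ⟪x, ν z⟫ := by
        have he : ⟪u, ν z⟫ = σ * ‖x‖⁻¹ * ⟪x, ν z⟫ := by
          rw [hu_def, real_inner_smul_left]
        rw [he] at hδz
        calc δ*‖x‖ ≤ (σ * ‖x‖⁻¹ * ⟪x, ν z⟫) * ‖x‖ :=
              mul_le_mul_of_nonneg_right hδz hxn.le
          _ = σ * ⟪x, ν z⟫ := by field_simp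
      have hM : δ*‖x‖/(lam*R) ≤ σ * (⟪x, ν z⟫/(lam * H z)) := by
        rw [show σ * (⟪x, ν z⟫/(lam * H z)) = (σ * ⟪x, ν z⟫)/(lam * H z) by ring]
        apply div_le_div₀ (le_trans (by positivity) hσx) hσx (by positivity)
        exact mul_le_mul_of_nonneg_left (hHub z hzfr) hlam.le
      have hs1 : 1 ≤ σ * (⟪x, ν z⟫/(lam * H z)) := le_trans hM1 hM
      have hsup2 : (σ * (⟪x, ν z⟫/(lam * H z))) * φ σ ≤
          φ ((σ * (⟪x, ν z⟫/(lam * H z))) * σ) := hsuper σ _ hs1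
      have hid : (σ * (⟪x, ν z⟫/(lam * H z))) * σ = ⟪x, ν z⟫/(lam * H z) := by
        rw [mul_comm, ← mul_assoc, hσsq, one_mul]
      rw [hid] at hsup2
      have hφarg : (δ*‖x‖/(lam*R)) * φ σ ≤ φ (⟪x, ν z⟫/(lam * H z)) := by
        calc (δ*‖x‖/(lam*R)) * φ σ ≤ (σ * (⟪x, ν z⟫/(lam * H z))) * φ σ :=
              mul_le_mul_of_nonneg_right hM hσpos.le
          _ ≤ φ (⟪x, ν z⟫/(lam * H z)) := hsup2
      rw [hG]
      dsimp only
      exact mul_le_mul hφarg (hHlb z hzfr) hr.le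
        (le_trans (by positivity) hφarg)
    have hint1 : (δ*‖x‖/(lam*R)) * φ σ * r * (μH[(m:ℝ)] A).toReal
        ≤ ∫ z in A, G lam z ∂(μH[(m:ℝ)]) :=
      by have h := setIntegral_ge_of_const_le_real hAmeas hAfin hpt ((hGint lam hlam).mono_set hAsub)
         rw [measureReal_def] at h; exact h
    have hint2 : (∫ z in A, G lam z ∂(μH[(m:ℝ)])) ≤ F lam := by
      apply setIntegral_mono_set (hGint lam hlam) ?_ (HasSubset.Subset.eventuallyLE hAsub)
      have hnn : ∀ᵐ z ∂(μH[(m:ℝ)].restrict (frontier K)), 0 ≤ G lam z := by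
        rw [ae_restrict_iff' hfrmeas]
        exact Filter.Eventually.of_forall (fun z hz => mul_nonneg (hφnonneg _) (hHpos z hz).le)
      filter_upwards [hnn] with z h
      simpa using h
    have hgt : nV < (δ*‖x‖/(lam*R)) * φ σ * r * (μH[(m:ℝ)] A).toReal := by
      have h2 := lt_of_lt_of_le hcon (min_le_right _ _)
      rw [lt_div_iff₀ (by positivity)] at h2
      rw [show (δ*‖x‖/(lam*R)) * φ σ * r * (μH[(m:ℝ)] A).toReal
          = (δ*‖x‖*(φ σ)*r*(μH[(m:ℝ)] A).toReal)/(lam*R) by ring]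
      rw [lt_div_iff₀ (by positivity)]
      nlinarith
    linarith
  -- infimum of S
  set lam₀ : ℝ := sInf S with hlam₀def
  have hSbdd : BddBelow S := ⟨lam_min, hSlb⟩
  have hlam₀ge : lam_min ≤ lam₀ := le_csInf hSne hSlb
  have hlam₀pos : 0 < lam₀ := lt_of_lt_of_le hlm0 hlam₀ge
  have hup : ∀ lam ∈ S, ∀ lam' : ℝ, lam ≤ lam' → lam' ∈ S := by
    rintro lam ⟨h1, h2⟩ lam' hle
    exact ⟨lt_of_lt_of_le h1 hle, le_trans (hFmono lam lam' h1 hle) h2⟩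
  have hseq : ∀ j : ℕ, lam₀ + 1/((j:ℝ)+1) ∈ S := by
    intro j
    have hpos : (0:ℝ) < 1/((j:ℝ)+1) := by positivity
    obtain ⟨lam, hlamS, hlt⟩ := exists_lt_of_csInf_lt hSne
      (show sInf S < lam₀ + 1/((j:ℝ)+1) by rw [← hlam₀def]; linarith)
    exact hup lam hlamS _ hlt.le
  have hFtendsto : Filter.Tendsto (fun j : ℕ => F (lam₀ + 1/((j:ℝ)+1)))
      Filter.atTop (nhds (F lam₀)) := by
    rw [hF]
    apply tendsto_integral_of_dominated_convergence (G lam₀)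
    · intro j
      exact (hGmeas _).aestronglyMeasurable
    · exact hGint lam₀ hlam₀pos
    · intro j
      rw [ae_restrict_iff' hfrmeas]
      apply Filter.Eventually.of_forall
      intro z hz
      rw [Real.norm_eq_abs, abs_of_nonneg (mul_nonneg (hφnonneg _) (hHpos z hz).le)]
      exact hGptmono lam₀ _ hlam₀pos
        (by have h2 : (0:ℝ) < 1/((j:ℝ)+1) := by positivity
            linarith) z hz
    · apply Filter.Eventually.of_forall
      intro z
      have hlamj : Filter.Tendsto (fun j : ℕ => lam₀ + 1/((j:ℝ)+1)) Filter.atTop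
          (nhds lam₀) := by
        have h1 := tendsto_one_div_add_atTop_nhds_zero_nat (𝕜 := ℝ)
        have h2 := Filter.Tendsto.const_add lam₀ h1
        simpa using h2
      rcases eq_or_ne (H z) 0 with hz0|hz0
      · have hzero : ∀ lam : ℝ, G lam z = 0 := by
          intro lam
          rw [hG]
          dsimp only
          rw [hz0, mul_zero]
        rw [hzero]
        simp only [hzero]
        exact tendsto_const_nhds
      · have hcont : Filter.Tendsto (fun lam : ℝ => G lam z) (nhds lam₀)
            (nhds (G lam₀ z)) := by
          rw [hG]
          dsimp only
          apply Filter.Tendsto.mul_const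
          apply (hφcont.tendsto _).comp
          apply Filter.Tendsto.div tendsto_const_nhds
          · exact (continuous_id.mul continuous_const).tendsto _
          · exact mul_ne_zero hlam₀pos.ne' hz0
        exact hcont.comp hlamj
  have hlam₀S : lam₀ ∈ S := by
    refine ⟨hlam₀pos, ?_⟩
    exact le_of_tendsto hFtendsto (Filter.Eventually.of_forall (fun j => (hseq j).2))
  refine ⟨lam₀, hlam₀pos, ?_⟩
  rw [hsetEq]
  ext lam
  simp only [Set.mem_Ici]
  constructor
  · intro hl
    exact csInf_le hSbdd hl
  · intro hl
    exact hup lam₀ hlam₀S lam hl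
end

section
/- Let K be a convex body in ℝⁿ spinning around u (o-symmetric, u ∈ ∂K, axis of rotation ℝu, K ∩ u^⊥ = Bⁿ ∩ u^⊥). If t ∈ (0, 1/3), v ∈ S^{n-1} ∩ u^⊥, w ∈ u^⊥ ∩ S^{n-1}, and τ√t·u + (1−t)v ∈ K for some τ > 0, then τ√t·u + (1−2t)v + √t·w ∈ K. -/
open RealInnerProductSpace

lemma exists_iso_pair {n : ℕ} (u v e : EuclideanSpace ℝ (Fin n))
    (hu : ‖u‖ = 1) (hv : ‖v‖ = 1) (he : ‖e‖ = 1)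
    (huv : ⟪u, v⟫ = 0) (hue : ⟪u, e⟫ = 0) :
    ∃ f : EuclideanSpace ℝ (Fin n) ≃ₗᵢ[ℝ] EuclideanSpace ℝ (Fin n), f u = u ∧ f v = e := by
  have huu : ⟪u, u⟫ = (1:ℝ) := by rw [real_inner_self_eq_norm_sq, hu]; norm_num
  have hvv : ⟪v, v⟫ = (1:ℝ) := by rw [real_inner_self_eq_norm_sq, hv]; norm_num
  have hvu : ⟪v, u⟫ = (0:ℝ) := by rw [real_inner_comm]; exact huv
  have hn2 : 2 ≤ n := by
    have h : LinearIndependent ℝ ![u, v] := by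
      have : Orthonormal ℝ ![u, v] := by
        rw [orthonormal_iff_ite]
        intro i j
        fin_cases i <;> fin_cases j <;>
          simp only [Matrix.cons_val_zero, Matrix.cons_val_one, Matrix.head_cons] <;>
          simp [huu, hvv, huv, hvu, hu, hv]
      exact this.linearIndependent
    have := h.fintype_card_le_finrank
    simpa using this
  have hcard : Module.finrank ℝ (EuclideanSpace ℝ (Fin n)) = Fintype.card (Fin n) := by simp
  set i0 : Fin n := ⟨0, by omega⟩ with hi0def
  set i1 : Fin n := ⟨1, by omega⟩ with hi1def
  have h01 : i0 ≠ i1 := by simp [hi0def, hi1def, Fin.ext_iff]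
  have key : ∀ x : EuclideanSpace ℝ (Fin n), ‖x‖ = 1 → ⟪u, x⟫ = 0 →
      ∃ b : OrthonormalBasis (Fin n) ℝ (EuclideanSpace ℝ (Fin n)), b i0 = u ∧ b i1 = x := by
    intro x hx hux
    have hxx : ⟪x, x⟫ = (1:ℝ) := by rw [real_inner_self_eq_norm_sq, hx]; norm_num
    have hxu : ⟪x, u⟫ = (0:ℝ) := by rw [real_inner_comm]; exact hux
    have hON : Orthonormal ℝ (({i0, i1} : Set (Fin n)).restrict
        (fun i => if i = i0 then u else x)) := by
      rw [orthonormal_iff_ite]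
      rintro ⟨i, hi⟩ ⟨j, hj⟩
      simp only [Set.mem_insert_iff, Set.mem_singleton_iff] at hi hj
      rcases hi with rfl | rfl <;> rcases hj with rfl | rfl <;>
        simp only [Set.restrict, if_pos rfl, if_neg h01.symm, Subtype.mk.injEq,
          if_pos rfl, h01, h01.symm, if_neg, ite_true, ite_false] <;>
        simp [huu, hxx, hux, hxu, h01, h01.symm, hu, hx]
    obtain ⟨b, hb⟩ := hON.exists_orthonormalBasis_extension_of_card_eq hcard
    refine ⟨b, ?_, ?_⟩
    · simpa using hb i0 (by simp)
    · have := hb i1 (by simp)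
      simpa [h01.symm] using this
  obtain ⟨b₁, hb₁0, hb₁1⟩ := key v hv huv
  obtain ⟨b₂, hb₂0, hb₂1⟩ := key e he hue
  have gen : ∀ i : Fin n, (b₁.repr.trans b₂.repr.symm) (b₁ i) = b₂ i := by
    intro i
    simp [LinearIsometryEquiv.trans_apply, OrthonormalBasis.repr_self,
      OrthonormalBasis.repr_symm_single]
  refine ⟨b₁.repr.trans b₂.repr.symm, ?_, ?_⟩
  · conv_lhs => rw [← hb₁0]
    rw [gen]; exact hb₂0
  · conv_lhs => rw [← hb₁1]
    rw [gen]; exact hb₂1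

theorem stmt_19 (n : ℕ) (u v w : EuclideanSpace ℝ (Fin n))
    (hu : ‖u‖ = 1) (hv : ‖v‖ = 1) (hw : ‖w‖ = 1)
    (huv : ⟪u, v⟫ = 0) (huw : ⟪u, w⟫ = 0) (hvw : ⟪v, w⟫ = 0)
    (K : Set (EuclideanSpace ℝ (Fin n))) (hKcomp : IsCompact K) (hKconv : Convex ℝ K)
    (hKint : (interior K).Nonempty)
    (hKsymm : ∀ x ∈ K, -x ∈ K)
    (huK : u ∈ frontier K)
    (hKrot : ∀ f : EuclideanSpace ℝ (Fin n) ≃ₗᵢ[ℝ] EuclideanSpace ℝ (Fin n),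
      f u = u → f '' K = K)
    (hKeq : {x ∈ K | ⟪x, u⟫ = 0} = {x ∈ Metric.closedBall 0 1 | ⟪x, u⟫ = 0})
    (t τ : ℝ) (ht : t ∈ Set.Ioo (0 : ℝ) (1 / 3)) (hτ : 0 < τ)
    (hmem : (τ * Real.sqrt t) • u + (1 - t) • v ∈ K) :
    (τ * Real.sqrt t) • u + (1 - 2 * t) • v + Real.sqrt t • w ∈ K := by
  obtain ⟨ht0, ht3⟩ := ht
  set st := Real.sqrt t with hstdef
  have hst2 : st ^ 2 = t := Real.sq_sqrt ht0.le
  have hstpos : 0 < st := Real.sqrt_pos.2 ht0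
  have h1t : (0:ℝ) < 1 - t := by linarith
  have h1t' : (1:ℝ) - t ≠ 0 := ne_of_gt h1t
  set ρ := Real.sqrt ((1 - 2*t)^2 + t) with hρdef
  have hρ2 : ρ ^ 2 = (1 - 2*t)^2 + t := Real.sq_sqrt (by positivity)
  have hρpos : 0 < ρ := Real.sqrt_pos.2 (by positivity)
  set s := Real.sqrt (t * (1 - 3*t)) with hsdef
  have hs2 : s ^ 2 = t * (1 - 3*t) := Real.sq_sqrt (mul_nonneg ht0.le (by linarith))
  clear_value st ρ s
  have hD : ((1:ℝ)-t)*ρ ≠ 0 := by positivity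
  set a : ℝ := ((1 - 2*t)*ρ - s*st)/((1-t)*ρ) with hadef
  set b : ℝ := (st*ρ + s*(1-2*t))/((1-t)*ρ) with hbdef
  set c : ℝ := ((1 - 2*t)*ρ + s*st)/((1-t)*ρ) with hcdef
  set d : ℝ := (st*ρ - s*(1-2*t))/((1-t)*ρ) with hddef
  have hident1 : ((1-2*t)*ρ - s*st)^2 + (st*ρ + s*(1-2*t))^2 = ((1-t)*ρ)^2 := by
    linear_combination (ρ^2+s^2)*hst2 + (-(t*(1-3*t)))*hρ2 + ((1-2*t)^2+t)*hs2
  have hident2 : ((1-2*t)*ρ + s*st)^2 + (st*ρ - s*(1-2*t))^2 = ((1-t)*ρ)^2 := by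
    linear_combination (ρ^2+s^2)*hst2 + (-(t*(1-3*t)))*hρ2 + ((1-2*t)^2+t)*hs2
  have key1 : a^2 + b^2 = 1 := by
    rw [hadef, hbdef, div_pow, div_pow, ← add_div, hident1,
      div_self (pow_ne_zero _ hD)]
  have key2 : c^2 + d^2 = 1 := by
    rw [hcdef, hddef, div_pow, div_pow, ← add_div, hident2,
      div_self (pow_ne_zero _ hD)]
  have hac : (1-t)*(a + c) = 2*(1-2*t) := by
    rw [hadef, hcdef]; field_simp; ring
  have hbd : (1-t)*(b + d) = 2*st := by
    rw [hbdef, hddef]; field_simp; ring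
  clear_value a b c d
  set e₁ : EuclideanSpace ℝ (Fin n) := a • v + b • w with he₁def
  set e₂ : EuclideanSpace ℝ (Fin n) := c • v + d • w with he₂def
  have hnorm : ∀ x y : ℝ, x^2 + y^2 = 1 → ‖x • v + y • w‖ = 1 := by
    intro x y hxy
    have h : ‖x • v + y • w‖^2 = 1 := by
      rw [norm_add_sq_real, norm_smul, norm_smul, real_inner_smul_left, real_inner_smul_right,
        hvw]
      simp only [hv, hw, Real.norm_eq_abs, mul_one, mul_zero]
      rw [sq_abs, sq_abs]
      linarith
    calc ‖x • v + y • w‖ = Real.sqrt (‖x • v + y • w‖^2) :=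
          (Real.sqrt_sq (norm_nonneg _)).symm
      _ = 1 := by rw [h, Real.sqrt_one]
  have hinner : ∀ x y : ℝ, ⟪u, x • v + y • w⟫ = (0:ℝ) := by
    intro x y
    rw [inner_add_right, real_inner_smul_right, real_inner_smul_right, huv, huw]
    ring
  obtain ⟨f₁, hf₁u, hf₁v⟩ := exists_iso_pair u v e₁ hu hv (hnorm _ _ key1) huv (hinner _ _)
  obtain ⟨f₂, hf₂u, hf₂v⟩ := exists_iso_pair u v e₂ hu hv (hnorm _ _ key2) huv (hinner _ _)
  have hmem1 : (τ * st) • u + (1 - t) • e₁ ∈ K := by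
    rw [← hKrot f₁ hf₁u]
    refine ⟨_, hmem, ?_⟩
    rw [map_add, map_smul, map_smul, hf₁u, hf₁v]
  have hmem2 : (τ * st) • u + (1 - t) • e₂ ∈ K := by
    rw [← hKrot f₂ hf₂u]
    refine ⟨_, hmem, ?_⟩
    rw [map_add, map_smul, map_smul, hf₂u, hf₂v]
  have hmid := hKconv hmem1 hmem2 (by norm_num : (0:ℝ) ≤ 1/2) (by norm_num : (0:ℝ) ≤ 1/2)
    (by norm_num)
  convert hmid using 1
  rw [he₁def, he₂def]
  match_scalars
  · ring
  · linear_combination (-1/2) * hac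
  · linear_combination (-1/2) * hbd
end
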